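/- arXiv:1406.5147 — 3 statements merged into one kernel-verified Lean document; each statement's English description precedes it below -/
import Mathlib

section
/- Let G be a planar ribbon graph, let u be a vertex of G, and let e_0, …, e_k be consecutive outgoing edges from u in the cyclic order at u. For i = 0, …, k, let r_i be the face of G (equivalently, the vertex of G*) lying to the right of e_i with respect to the cyclic order at u. Then φ(∠^u(e_0, e_k)) = [r_0 − r_k] in Jac(G*). -/
attribute [local instance 10] Classical.propDecidable

/-- A finite multigraph, presented by darts (oriented edges): `rev` is the
fixed-point-free involution exchanging the two darts of each edge, and
`head d` is the vertex the dart `d` points to. -/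
structure Multigraph where
  V : Type
  D : Type
  fV : Fintype V
  dV : DecidableEq V
  fD : Fintype D
  dD : DecidableEq D
  rev : D → D
  rev_invol : Function.Involutive rev
  rev_ne : ∀ d : D, rev d ≠ d
  head : D → V

attribute [instance] Multigraph.fV Multigraph.dV Multigraph.fD Multigraph.dD

namespace Multigraph

variable (G : Multigraph)

/-- The tail (starting vertex) of a dart. -/
def tail (d : G.D) : G.V := G.head (G.rev d)

/-- `G` is loopless: no edge has equal endpoints. -/
def Loopless : Prop := ∀ d : G.D, G.head d ≠ G.tail d

/-- One-step adjacency between vertices. -/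
def Adj (u v : G.V) : Prop := ∃ d : G.D, G.tail d = u ∧ G.head d = v

/-- `G` is connected. -/
def Connected : Prop := ∀ u v : G.V, Relation.ReflTransGen G.Adj u v

/-- The degree of a vertex: the number of darts with tail `v`. -/
def degree (v : G.V) : ℕ := (Finset.univ.filter fun d : G.D => G.tail d = v).card

/-- The number of edges joining `v` to `w`. -/
def mul (v w : G.V) : ℕ :=
  (Finset.univ.filter fun d : G.D => G.tail d = v ∧ G.head d = w).card

/-! ### Divisors and the sandpile group -/

/-- The total degree homomorphism on divisors. -/
def degHom : (G.V → ℤ) →+ ℤ where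
  toFun x := ∑ v, x v
  map_zero' := by simp
  map_add' x y := by simp [Finset.sum_add_distrib]

/-- Degree-zero divisors. -/
def Div0 : AddSubgroup (G.V → ℤ) := G.degHom.ker

/-- The principal divisor of a lending move at `v`: `v` loses `deg v` chips and
each other vertex `w` gains `n(v,w)` chips. -/
def prin (v : G.V) : G.V → ℤ :=
  fun w => if w = v then -(G.degree v : ℤ) else (G.mul v w : ℤ)

/-- The subgroup of `ℤV` generated by all lending moves. -/
def Prin : AddSubgroup (G.V → ℤ) := AddSubgroup.closure (Set.range G.prin)

/-- Two divisors are linearly equivalent when they differ by a sequence of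
lending moves. -/
def LinEquiv (D D' : G.V → ℤ) : Prop := D' - D ∈ G.Prin

/-- The sandpile group (Jacobian) of `G`: degree-zero divisors modulo
linear equivalence. -/
def Jac := G.Div0 ⧸ (G.Prin.addSubgroupOf G.Div0)

instance : AddCommGroup G.Jac :=
  inferInstanceAs (AddCommGroup (G.Div0 ⧸ (G.Prin.addSubgroupOf G.Div0)))

/-- The divisor class of a degree-zero divisor in the sandpile group. -/
def divClass (D : G.Div0) : G.Jac := QuotientAddGroup.mk D

/-- The divisor `a - b` for vertices `a`, `b`. -/
def unitDivFun (a b : G.V) : G.V → ℤ :=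
  fun w => (if w = a then 1 else 0) - (if w = b then 1 else 0)

lemma unitDivFun_mem (a b : G.V) : G.unitDivFun a b ∈ G.Div0 := by
  simp [Div0, degHom, AddMonoidHom.mem_ker, unitDivFun, Finset.sum_sub_distrib]

/-- The divisor `a - b` as a degree-zero divisor. -/
def unitDiv (a b : G.V) : G.Div0 := ⟨G.unitDivFun a b, G.unitDivFun_mem a b⟩

/-- The class `[a - b] ∈ Jac(G)`. -/
def unitClass (a b : G.V) : G.Jac := G.divClass (G.unitDiv a b)

/-- The boundary of a dart: `∂ d = [d⁺ - d⁻] ∈ Jac(G)`. -/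
def dartBoundary (d : G.D) : G.Jac := G.unitClass (G.head d) (G.tail d)

/-! ### The group ℤE of formal sums of oriented edges -/

/-- `ℤE`: functions on darts that are antisymmetric under reversal;
this is the free abelian group on the oriented edges, with `-e` identified
with the oppositely oriented edge. -/
def EdgeGroup : AddSubgroup (G.D → ℤ) where
  carrier := {x | ∀ d, x (G.rev d) = -x d}
  add_mem' := by
    intro a b ha hb d
    simp only [Pi.add_apply, ha d, hb d]
    ring
  zero_mem' := by intro d; simp
  neg_mem' := by
    intro a ha d
    simp only [Pi.neg_apply, ha d]

/-- The element of `ℤE` corresponding to a single oriented edge (dart). -/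
def dartVec (d : G.D) : G.D → ℤ :=
  fun d' => if d' = d then 1 else if d' = G.rev d then -1 else 0

lemma dartVec_mem (d : G.D) : G.dartVec d ∈ G.EdgeGroup := by
  have hinj := G.rev_invol.injective
  intro d'
  unfold dartVec
  rcases eq_or_ne d' d with rfl | h1
  · simp [G.rev_ne d']
  · rcases eq_or_ne d' (G.rev d) with rfl | h2
    · simp [G.rev_invol d, G.rev_ne d]
    · have h3 : G.rev d' ≠ d := fun h => h2 (by rw [← h, G.rev_invol])
      have h4 : G.rev d' ≠ G.rev d := fun h => h1 (hinj h)
      simp [h1, h2, h3, h4]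

/-- The vector of a list of darts (e.g. of a directed cycle). -/
def listVec (l : List G.D) : G.D → ℤ := (l.map G.dartVec).sum

/-- `l` is a directed cycle: a nonempty closed walk of darts through
pairwise distinct vertices. -/
def IsDirCycle (l : List G.D) : Prop :=
  l ≠ [] ∧ l.Chain' (fun a b => G.head a = G.tail b) ∧
    (∀ a ∈ l.getLast?, ∀ b ∈ l.head?, G.head a = G.tail b) ∧
    (l.map G.tail).Nodup

/-- The integral cycle space `𝒞 ⊆ ℤE`. -/
def CycleSpace : AddSubgroup (G.D → ℤ) :=
  AddSubgroup.closure {x | ∃ l : List G.D, G.IsDirCycle l ∧ x = G.listVec l}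

/-- The cut determined by a set `U` of vertices, directed out of `U`. -/
def cutVec (U : Finset G.V) : G.D → ℤ := fun d =>
  if G.tail d ∈ U ∧ G.head d ∉ U then 1
  else if G.head d ∈ U ∧ G.tail d ∉ U then -1 else 0

/-- The integral cut space `𝒞* ⊆ ℤE`. -/
def CutSpace : AddSubgroup (G.D → ℤ) :=
  AddSubgroup.closure (Set.range G.cutVec)

/-- `ℰ(G) = ℤE / (𝒞 + 𝒞*)`. -/
def EGroup :=
  G.EdgeGroup ⧸ ((G.CycleSpace ⊔ G.CutSpace).addSubgroupOf G.EdgeGroup)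

instance : AddCommGroup G.EGroup :=
  inferInstanceAs
    (AddCommGroup (G.EdgeGroup ⧸ ((G.CycleSpace ⊔ G.CutSpace).addSubgroupOf G.EdgeGroup)))

/-- The class of an oriented edge in `ℰ(G)`. -/
def eClass (d : G.D) : G.EGroup :=
  QuotientAddGroup.mk ⟨G.dartVec d, G.dartVec_mem d⟩

/-- The boundary map `ℤE → ℤV`, sending an oriented edge `e` to `e⁺ - e⁻`
(when restricted to `ℤE ⊆ (D → ℤ)`). -/
def bMap : (G.D → ℤ) →+ (G.V → ℤ) where
  toFun x := fun v => ∑ d ∈ Finset.univ.filter (fun d => G.head d = v), x d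
  map_zero' := by funext v; simp
  map_add' x y := by funext v; simp [Finset.sum_add_distrib]

/-! ### Spanning trees -/

/-- Adjacency using only darts in `T`. -/
def treeAdj (T : Finset G.D) (u v : G.V) : Prop :=
  ∃ d ∈ T, G.tail d = u ∧ G.head d = v

/-- `T` (a reversal-closed set of darts) is a spanning tree: it is connected,
meets every vertex, and has exactly `|V| - 1` edges (hence is acyclic). -/
def IsSpanningTree (T : Finset G.D) : Prop :=
  (∀ d ∈ T, G.rev d ∈ T) ∧
    (∀ u v : G.V, Relation.ReflTransGen (G.treeAdj T) u v) ∧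
    T.card = 2 * (Fintype.card G.V - 1)

/-- The reversal involution as a permutation of darts. -/
def revPerm : Equiv.Perm G.D := Function.Involutive.toPerm G.rev G.rev_invol

end Multigraph

/-- A ribbon graph: a multigraph together with, at each vertex, a cyclic
ordering of the incident edges (darts).  `next d` is the dart following `d`
in the cyclic order at the tail of `d`. -/
structure RibbonGraph extends Multigraph where
  next : Equiv.Perm toMultigraph.D
  next_tail : ∀ d : toMultigraph.D, toMultigraph.tail (next d) = toMultigraph.tail d
  next_cyclic : ∀ d d' : toMultigraph.D,
    toMultigraph.tail d = toMultigraph.tail d' → next.SameCycle d d'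

namespace RibbonGraph

variable (G : RibbonGraph)

/-- The face permutation of a ribbon graph; its orbits are the faces of the
associated surface embedding (the orbit of a dart `d` is the face to the left
of `d`, when the cyclic orders are taken clockwise). -/
def facePerm : Equiv.Perm G.D := G.next * G.revPerm

/-- Darts lie in the same face when they are in the same orbit of the face
permutation. -/
def faceSetoid : Setoid G.D :=
  ⟨G.facePerm.SameCycle,
    ⟨fun x => Equiv.Perm.SameCycle.refl _ x, fun h => h.symm, fun h h' => h.trans h'⟩⟩

/-- The faces of the surface embedding determined by the ribbon structure. -/
def Faces := Quotient G.faceSetoid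

instance : Fintype G.Faces :=
  @Quotient.fintype _ _ G.faceSetoid
    (fun a b => inferInstanceAs (Decidable (G.facePerm.SameCycle a b)))

/-- The face to the left of a dart. -/
def leftFace (d : G.D) : G.Faces := Quotient.mk G.faceSetoid d

/-- The face to the right of a dart. -/
def rightFace (d : G.D) : G.Faces := G.leftFace (G.rev d)

/-- `G` is a planar ribbon graph: the surface it embeds in has genus `0`,
i.e. Euler's formula `|V| - |E| + |F| = 2` holds. -/
def IsPlanar : Prop :=
  Fintype.card G.V + Fintype.card G.Faces = Fintype.card G.D / 2 + 2

/-! ### Rotor-routing -/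

/-- A rotor configuration with basepoint `q`: a choice, for each vertex
`v ≠ q`, of a dart with tail `v`. -/
def RotorConfig (q : G.V) :=
  {ρ : (v : G.V) → v ≠ q → G.D // ∀ (v : G.V) (h : v ≠ q), G.tail (ρ v h) = v}

/-- Firing the vertex `v ≠ q` in a state (chip configuration, rotor
configuration): the rotor at `v` advances to the next dart in the cyclic
order at `v`, and one chip moves from `v` to the head of the new rotor. -/
def fire (q : G.V) (v : G.V) (hv : v ≠ q) (s : (G.V → ℤ) × G.RotorConfig q) :
    (G.V → ℤ) × G.RotorConfig q :=
  ((fun w => s.1 w - (if w = v then 1 else 0) +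
      (if w = G.head (G.next (s.2.1 v hv)) then 1 else 0)),
   ⟨fun u hu => if u = v then G.next (s.2.1 v hv) else s.2.1 u hu, by
      intro u hu
      by_cases h : u = v
      · simp only [if_pos h]
        rw [G.next_tail, s.2.2 v hv, h]
      · simp only [if_neg h]
        exact s.2.2 u hu⟩)

/-- A single legal rotor-routing step: fire some vertex `v ≠ q` carrying at
least one chip. -/
def Step (q : G.V) (s s' : (G.V → ℤ) × G.RotorConfig q) : Prop :=
  ∃ (v : G.V) (hv : v ≠ q), 1 ≤ s.1 v ∧ s' = G.fire q v hv s

/-- A state is terminal when no vertex other than `q` can be fired. -/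
def Terminal (q : G.V) (s : (G.V → ℤ) × G.RotorConfig q) : Prop :=
  ∀ v : G.V, v ≠ q → s.1 v ≤ 0

/-- `ρ` is the rotor configuration obtained by orienting the spanning tree
`T` towards the root `q`: every rotor is a dart of `T`, and following the
rotors from any vertex leads to `q`. -/
def TowardRoot (q : G.V) (T : Finset G.D) (ρ : G.RotorConfig q) : Prop :=
  ∀ (v : G.V) (h : v ≠ q), ρ.1 v h ∈ T ∧
    Relation.ReflTransGen (fun a b => ∃ ha : a ≠ q, G.head (ρ.1 a ha) = b) v q

/-- The rotor-routing process started from a representative of `x` that is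
nonnegative away from `q` and from the rotor configuration of `T` oriented
towards `q` terminates at the rotor configuration of `T'` oriented towards
`q`. -/
def ActsTo (q : G.V) (x : G.Jac) (T T' : Finset G.D) : Prop :=
  ∃ D : G.Div0, G.divClass D = x ∧ (∀ v : G.V, v ≠ q → 0 ≤ (D : G.V → ℤ) v) ∧
    ∃ (ρ ρ' : G.RotorConfig q) (c' : G.V → ℤ),
      G.TowardRoot q T ρ ∧ G.TowardRoot q T' ρ' ∧
      Relation.ReflTransGen (G.Step q) ((D : G.V → ℤ), ρ) (c', ρ') ∧
      G.Terminal q (c', ρ')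

/-- The rotor-routing action of the sandpile group element `x` on the
spanning tree `T`, with basepoint `q`. -/
noncomputable def rotorAction (q : G.V) (x : G.Jac) (T : Finset G.D) :
    Finset G.D :=
  if h : ∃ T' : Finset G.D, G.IsSpanningTree T' ∧ G.ActsTo q x T T' then
    h.choose
  else T

/-! ### Angles -/

/-- The angle `∠ᵘ(d, d')` between two darts with the same tail `u`:
if `d = e₀, e₁, …, e_k = d'` are the consecutive darts in the cyclic order
at `u`, the angle is `∑_{i=1}^{k} ∂ eᵢ ∈ Jac(G)`. -/
noncomputable def dartAngle (d d' : G.D) : G.Jac :=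
  if h : ∃ k : ℕ, (⇑G.next)^[k] d = d' then
    ∑ i ∈ Finset.range (Nat.find h), G.dartBoundary ((⇑G.next)^[i + 1] d)
  else 0

/-- The angle `∠_v(T, T')` between two spanning trees `T, T'` based at `v`:
the sum over all vertices `u ≠ v` of the angles between the rotors of `T`
and of `T'` at `u` (both oriented towards `v`). -/
noncomputable def treeAngle (v : G.V) (T T' : Finset G.D) : G.Jac :=
  if h : ∃ p : G.RotorConfig v × G.RotorConfig v,
      G.TowardRoot v T p.1 ∧ G.TowardRoot v T' p.2 then
    ∑ u : G.V,
      if hu : u = v then 0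
      else G.dartAngle (h.choose.1.1 u hu) (h.choose.2.1 u hu)
  else 0


/-! ### The planar dual ribbon graph -/

/-- The dual ribbon graph `G*` of a ribbon graph `G`: its vertices are the
faces of `G`, its darts are the darts of `G`, where the dart `d`, viewed in
the dual, crosses `d` from the face after `d` (its right, its dual tail) to
the face before `d` (its left, its dual head), and the cyclic orders at the
faces are the counter-clockwise ones. -/
noncomputable def dual : RibbonGraph where
  V := G.Faces
  D := G.D
  fV := inferInstance
  dV := Classical.decEq _
  fD := G.fD
  dD := G.dD
  rev := G.rev
  rev_invol := G.rev_invol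
  rev_ne := G.rev_ne
  head := fun d => G.leftFace d
  next := G.revPerm * G.facePerm * G.revPerm
  next_tail := by
    intro d
    show G.leftFace (G.rev (G.rev (G.facePerm (G.rev d)))) = G.leftFace (G.rev d)
    rw [G.rev_invol]
    exact Quotient.sound ⟨-1, by simp⟩
  next_cyclic := by
    intro d d' h
    have h1 : G.facePerm.SameCycle (G.rev d) (G.rev d') := Quotient.exact h
    have h2 := h1.conj (g := G.revPerm)
    have hR : G.revPerm⁻¹ = G.revPerm := by
      rw [Equiv.Perm.inv_def]
      exact Function.Involutive.toPerm_symm G.rev_invol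
    rw [hR] at h2
    have e1 : G.revPerm (G.rev d) = d := G.rev_invol d
    have e2 : G.revPerm (G.rev d') = d' := G.rev_invol d'
    rw [e1, e2] at h2
    exact h2


end RibbonGraph


lemma Multigraph.unitClass_self_aux (G : Multigraph) (a : G.V) :
    G.unitClass a a = 0 := by
  have h : G.unitDiv a a = 0 := by
    apply Subtype.ext; funext w; simp [Multigraph.unitDiv, Multigraph.unitDivFun]
  unfold Multigraph.unitClass Multigraph.divClass
  rw [h]
  rfl

lemma Multigraph.unitClass_add_aux (G : Multigraph) (a b c : G.V) :
    G.unitClass a b + G.unitClass b c = G.unitClass a c := by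
  have h : G.unitDiv a b + G.unitDiv b c = G.unitDiv a c := by
    apply Subtype.ext; funext w
    simp [Multigraph.unitDiv, Multigraph.unitDivFun]
  unfold Multigraph.unitClass Multigraph.divClass
  rw [← h]
  rfl

lemma RibbonGraph.leftFace_next_aux (G : RibbonGraph) (d : G.D) :
    G.leftFace (G.next d) = G.rightFace d := by
  unfold RibbonGraph.rightFace RibbonGraph.leftFace
  refine (Quotient.sound ?_).symm
  refine ⟨1, ?_⟩
  show G.facePerm (G.rev d) = G.next d
  simp [RibbonGraph.facePerm, Multigraph.revPerm, Function.Involutive.toPerm,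
    G.rev_invol d]

/-- For consecutive outgoing darts `e₀, …, e_k` at a vertex `u`
of a planar ribbon graph, with `rᵢ` the face to the right of `eᵢ`,
`φ(∠ᵘ(e₀, e_k)) = [r₀ - r_k] ∈ Jac(G*)`. -/
theorem dual_of_dart_angle (G : RibbonGraph)
    (hconn : G.Connected) (hloop : G.Loopless) (hplanar : G.IsPlanar)
    (hdualloop : G.dual.Loopless)
    (φ : G.Jac ≃+ G.dual.Jac)
    (hφ : ∀ d : G.D, φ (G.dartBoundary d) = G.dual.dartBoundary d)
    (u : G.V) (k : ℕ) (e : G.D) (he : G.tail e = u) :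
    φ (G.dartAngle e ((⇑G.next)^[k] e)) =
      G.dual.unitClass (G.rightFace e) (G.rightFace ((⇑G.next)^[k] e)) := by
  have key : ∀ n : ℕ, φ (∑ i ∈ Finset.range n, G.dartBoundary ((⇑G.next)^[i + 1] e)) =
      G.dual.unitClass (G.rightFace e) (G.rightFace ((⇑G.next)^[n] e)) := by
    intro n
    induction n with
    | zero =>
      simpa using (Multigraph.unitClass_self_aux G.dual.toMultigraph (G.rightFace e)).symm
    | succ n ih =>
      rw [Finset.sum_range_succ, map_add, ih, hφ]
      have hb : G.dual.dartBoundary ((⇑G.next)^[n + 1] e) =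
          G.dual.unitClass (G.rightFace ((⇑G.next)^[n] e))
            (G.rightFace ((⇑G.next)^[n + 1] e)) := by
        show G.dual.unitClass (G.dual.head _) (G.dual.toMultigraph.tail _) = _
        congr 1
        · show G.leftFace ((⇑G.next)^[n + 1] e) = _
          rw [Function.iterate_succ_apply']
          exact RibbonGraph.leftFace_next_aux G _
      rw [hb]
      exact Multigraph.unitClass_add_aux _ _ _ _
  unfold RibbonGraph.dartAngle
  have hex : ∃ m : ℕ, (⇑G.next)^[m] e = (⇑G.next)^[k] e := ⟨k, rfl⟩
  rw [dif_pos hex, key (Nat.find hex), Nat.find_spec hex]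
end

section
/- Let G be a planar ribbon graph, let v be a vertex, and let T and T' be spanning trees of G. Then ∠_v(T, T') = 0 in Jac(G) if and only if T = T'. -/
attribute [local instance 10] Classical.propDecidable

section AngleAux

open Finset

variable (G : RibbonGraph)

lemma AA_tail_rev (d : G.D) : G.tail (G.rev d) = G.head d := by
  show G.head (G.rev (G.rev d)) = G.head d
  rw [G.rev_invol d]

lemma AA_tail_iterate (d : G.D) (i : ℕ) :
    G.tail ((⇑G.next)^[i] d) = G.tail d := by
  induction i with
  | zero => rfl
  | succ k ih => rw [Function.iterate_succ_apply', G.next_tail, ih]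

lemma AA_sum_rev {M : Type} [AddCommMonoid M] (f : G.D → M) :
    ∑ d, f (G.rev d) = ∑ d, f d :=
  Equiv.sum_comp (Function.Involutive.toPerm G.rev G.rev_invol) f

lemma AA_bMap_apply (x : G.D → ℤ) (w : G.V) :
    G.bMap x w = ∑ d, if G.head d = w then x d else 0 := by
  show ∑ d ∈ Finset.univ.filter (fun d => G.head d = w), x d = _
  rw [Finset.sum_filter]

lemma AA_degree_eq (w : G.V) :
    (G.degree w : ℤ) = ∑ d, if G.tail d = w then 1 else 0 := by
  rw [Multigraph.degree, Finset.sum_boole]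

lemma AA_mul_eq (u w : G.V) :
    (G.mul u w : ℤ) = ∑ d, if G.tail d = u ∧ G.head d = w then 1 else 0 := by
  rw [Multigraph.mul, Finset.sum_boole]

lemma AA_mul_self (hloop : G.Loopless) (w : G.V) : (G.mul w w : ℤ) = 0 := by
  rw [AA_mul_eq]
  apply Finset.sum_eq_zero
  intro d _
  rw [if_neg]
  rintro ⟨h1, h2⟩
  exact hloop d (h2.trans h1.symm)

lemma AA_indeg (w : G.V) :
    (∑ d, if G.head d = w then (1:ℤ) else 0) = ∑ d, if G.tail d = w then (1:ℤ) else 0 := by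
  rw [← AA_sum_rev G (fun d => if G.tail d = w then (1:ℤ) else 0)]
  apply Finset.sum_congr rfl
  intro d _
  rw [AA_tail_rev]

lemma AA_partition (g : G.D → ℤ) :
    ∑ d, g d = ∑ u, ∑ d, if G.tail d = u then g d else 0 := by
  rw [Finset.sum_comm]
  apply Finset.sum_congr rfl
  intro d _
  rw [Finset.sum_ite_eq Finset.univ (G.tail d) (fun _ => g d)]
  simp

/-- The "Laplacian image" of an integer vertex function. -/
noncomputable def AALc (c : G.V → ℤ) : G.V → ℤ := fun w => ∑ u, c u * G.prin u w

lemma AA_bMap_grad (hloop : G.Loopless) (c : G.V → ℤ) (w : G.V) :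
    G.bMap (fun e => c (G.tail e) - c (G.head e)) w = AALc G c w := by
  have h1 : G.bMap (fun e => c (G.tail e) - c (G.head e)) w
      = (∑ d, if G.head d = w then c (G.tail d) else 0)
        - (∑ d, if G.head d = w then (1:ℤ) else 0) * c w := by
    rw [AA_bMap_apply, Finset.sum_mul, ← Finset.sum_sub_distrib]
    apply Finset.sum_congr rfl
    intro d _
    by_cases h : G.head d = w
    · rw [if_pos h, if_pos h, if_pos h, h, one_mul]
    · rw [if_neg h, if_neg h, if_neg h, zero_mul, sub_zero]
  have h2 : (∑ d, if G.head d = w then c (G.tail d) else 0)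
      = ∑ u, c u * (G.mul u w : ℤ) := by
    rw [AA_partition G (fun d => if G.head d = w then c (G.tail d) else 0)]
    apply Finset.sum_congr rfl
    intro u _
    rw [AA_mul_eq, Finset.mul_sum]
    apply Finset.sum_congr rfl
    intro d _
    by_cases hd1 : G.tail d = u
    · by_cases hd2 : G.head d = w
      · rw [if_pos hd1, if_pos hd2, if_pos ⟨hd1, hd2⟩, mul_one, hd1]
      · rw [if_pos hd1, if_neg hd2, if_neg (by tauto), mul_zero]
    · rw [if_neg hd1, if_neg (by tauto), mul_zero]
  have h3 : AALc G c w = (∑ u, c u * (G.mul u w : ℤ)) - c w * (G.degree w : ℤ) := by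
    unfold AALc
    rw [← Finset.sum_erase_add _ _ (Finset.mem_univ w),
        ← Finset.sum_erase_add _ (fun u => c u * (G.mul u w : ℤ)) (Finset.mem_univ w)]
    have he : ∀ u ∈ Finset.univ.erase w, c u * G.prin u w = c u * (G.mul u w : ℤ) := by
      intro u hu
      have hne : w ≠ u := (Finset.ne_of_mem_erase hu).symm
      simp only [Multigraph.prin, if_neg hne]
    rw [Finset.sum_congr rfl he]
    have hw : G.prin w w = -(G.degree w : ℤ) := by simp [Multigraph.prin]
    rw [hw, AA_mul_self G hloop]
    ring
  rw [h1, h2, AA_indeg, ← AA_degree_eq, h3]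
  ring


lemma AA_out_sum (y : G.D → ℤ) (hy : ∀ e, y (G.rev e) = - y e) (u : G.V) :
    (∑ e, if G.tail e = u then y e else 0) = - G.bMap y u := by
  calc ∑ e, (if G.tail e = u then y e else 0)
      = ∑ e, (if G.tail (G.rev e) = u then y (G.rev e) else 0) :=
        (AA_sum_rev G _).symm
    _ = ∑ e, (if G.head e = u then - y e else 0) := by
        apply Finset.sum_congr rfl
        intro e _
        rw [AA_tail_rev, hy]
    _ = - ∑ e, (if G.head e = u then y e else 0) := by
        rw [← Finset.sum_neg_distrib]
        apply Finset.sum_congr rfl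
        intro e _
        split <;> simp
    _ = - G.bMap y u := by rw [AA_bMap_apply]

lemma AA_collapse (g : G.D → ℤ) (F : G.V → Prop) :
    (∑ u, ∑ e, if G.tail e = u ∧ F u then g e else 0)
      = ∑ e, if F (G.tail e) then g e else 0 := by
  rw [Finset.sum_comm]
  apply Finset.sum_congr rfl
  intro e _
  rw [Finset.sum_eq_single_of_mem (G.tail e) (Finset.mem_univ _)
    (fun u _ hu => if_neg (fun hc => hu (hc.1.symm)))]
  by_cases h : F (G.tail e)
  · rw [if_pos ⟨rfl, h⟩, if_pos h]
  · rw [if_neg (fun hc => h hc.2), if_neg h]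

/-- Membership of a dart in the "swept set" of the rotor system `(σ, n)`:
`e` is one of the first `n (tail e)` darts strictly after `σ (tail e)` in the
cyclic order at its tail. -/
def AASwp (σ : G.V → G.D) (n : G.V → ℕ) (e : G.D) : Prop :=
  ∃ i, 1 ≤ i ∧ i ≤ n (G.tail e) ∧ (⇑G.next)^[i] (σ (G.tail e)) = e

/-- The swept indicator vector in `ℤE`. -/
noncomputable def AAX (σ : G.V → G.D) (n : G.V → ℕ) : G.D → ℤ :=
  fun e => (if AASwp G σ n e then 1 else 0) - (if AASwp G σ n (G.rev e) then 1 else 0)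

lemma AAX_rev (σ : G.V → G.D) (n : G.V → ℕ) (e : G.D) :
    AAX G σ n (G.rev e) = - AAX G σ n e := by
  unfold AAX
  rw [G.rev_invol e]
  ring

lemma AAX_le_one (σ : G.V → G.D) (n : G.V → ℕ) (e : G.D) :
    AAX G σ n e ≤ 1 := by
  unfold AAX
  split <;> split <;> omega

lemma AAX_eq_one (σ : G.V → G.D) (n : G.V → ℕ) (e : G.D)
    (h : AAX G σ n e = 1) : AASwp G σ n e := by
  by_contra hn
  unfold AAX at h
  rw [if_neg hn] at h
  split at h <;> omega

/-- The core extremal ("least action") lemma: if the swept vector of a rotor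
system equals a gradient plus a circulation in `ℤE`, then the potential `c` is
maximized at the root, and every dart leaving the maximum set is swept. -/
lemma AA_claimA (hloop : G.Loopless) (v : G.V) (σ : G.V → G.D) (n : G.V → ℕ)
    (c : G.V → ℤ)
    (hσ : ∀ u, u ≠ v → G.tail (σ u) = u)
    (hns : ∀ u i, 1 ≤ i → i ≤ n u → (⇑G.next)^[i] (σ u) ≠ σ u)
    (hreach : ∀ u, u ≠ v →
      Relation.ReflTransGen (fun a b => a ≠ v ∧ G.head (σ a) = b) u v)
    (heq : ∀ w, G.bMap (AAX G σ n) w = AALc G c w) :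
    (∀ u, c u ≤ c v) ∧
      (∀ e, c (G.tail e) = c v → c (G.head e) ≠ c v → AASwp G σ n e) := by
  obtain ⟨u₀, -, hmax⟩ := Finset.exists_max_image Finset.univ c ⟨v, Finset.mem_univ v⟩
  have hmax' : ∀ u, c u ≤ c u₀ := fun u => hmax u (Finset.mem_univ u)
  set C := c u₀ with hCdef
  set Z : G.D → ℤ := fun e => AAX G σ n e - (c (G.tail e) - c (G.head e)) with hZdef
  have hhr : ∀ e : G.D, G.head (G.rev e) = G.tail e := fun e => rfl
  have hZrev : ∀ e, Z (G.rev e) = - Z e := by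
    intro e
    simp only [hZdef, AAX_rev, AA_tail_rev, hhr]
    ring
  have hbZ : ∀ w, G.bMap Z w = 0 := by
    intro w
    have h0 : Z = AAX G σ n - (fun e => c (G.tail e) - c (G.head e)) := rfl
    rw [h0, map_sub]
    have h2 : (G.bMap (AAX G σ n) - G.bMap fun e => c (G.tail e) - c (G.head e)) w
        = G.bMap (AAX G σ n) w - G.bMap (fun e => c (G.tail e) - c (G.head e)) w := rfl
    rw [h2, AA_bMap_grad G hloop c w, heq w, sub_self]
  have hZout : ∀ u, (∑ e, if G.tail e = u then Z e else 0) = 0 := by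
    intro u
    rw [AA_out_sum G Z hZrev u, hbZ u, neg_zero]
  -- the sum of `Z` over darts with tail in the max set vanishes
  have hS1 : (∑ e, if c (G.tail e) = C then Z e else 0) = 0 := by
    have h0 : ∀ e : G.D, (if c (G.tail e) = C then Z e else 0)
        = ∑ u, if G.tail e = u ∧ c u = C then Z e else 0 := by
      intro e
      rw [Finset.sum_eq_single_of_mem (G.tail e) (Finset.mem_univ _)
        (fun u _ hu => if_neg (fun hc => hu hc.1.symm))]
      by_cases h : c (G.tail e) = C
      · rw [if_pos h, if_pos ⟨rfl, h⟩]
      · rw [if_neg h, if_neg (fun hc => h hc.2)]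
    rw [Finset.sum_congr rfl (fun e _ => h0 e), Finset.sum_comm]
    apply Finset.sum_eq_zero
    intro u _
    by_cases h : c u = C
    · refine Eq.trans ?_ (hZout u)
      apply Finset.sum_congr rfl
      intro e _
      by_cases h2 : G.tail e = u
      · rw [if_pos ⟨h2, h⟩, if_pos h2]
      · rw [if_neg (fun hc => h2 hc.1), if_neg h2]
    · apply Finset.sum_eq_zero
      intro e _
      rw [if_neg (fun hc => h hc.2)]
  -- the sum of `Z` over darts inside the max set vanishes (by antisymmetry)
  have hS2 : (∑ e, if c (G.tail e) = C ∧ c (G.head e) = C then Z e else 0) = 0 := by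
    have hrefl : (∑ e, if c (G.tail e) = C ∧ c (G.head e) = C then Z e else 0)
        = - ∑ e, if c (G.tail e) = C ∧ c (G.head e) = C then Z e else 0 := by
      calc (∑ e, if c (G.tail e) = C ∧ c (G.head e) = C then Z e else 0)
          = ∑ e, (if c (G.tail (G.rev e)) = C ∧ c (G.head (G.rev e)) = C
              then Z (G.rev e) else 0) := (AA_sum_rev G _).symm
        _ = ∑ e, (if c (G.tail e) = C ∧ c (G.head e) = C then - Z e else 0) := by
            apply Finset.sum_congr rfl
            intro e _
            rw [AA_tail_rev, hhr, hZrev]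
            by_cases h1 : c (G.tail e) = C <;> by_cases h2 : c (G.head e) = C
            · rw [if_pos ⟨h2, h1⟩, if_pos ⟨h1, h2⟩]
            · rw [if_neg (fun hc => h2 hc.1), if_neg (fun hc => h2 hc.2)]
            · rw [if_neg (fun hc => h1 hc.2), if_neg (fun hc => h1 hc.1)]
            · rw [if_neg (fun hc => h1 hc.2), if_neg (fun hc => h1 hc.1)]
        _ = - ∑ e, (if c (G.tail e) = C ∧ c (G.head e) = C then Z e else 0) := by
            rw [← Finset.sum_neg_distrib]
            apply Finset.sum_congr rfl
            intro e _
            split <;> simp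
    set A := ∑ e, if c (G.tail e) = C ∧ c (G.head e) = C then Z e else 0
    omega
  -- hence the sum of `Z` over the out-boundary of the max set vanishes
  have hbd : (∑ e, if c (G.tail e) = C ∧ c (G.head e) ≠ C then Z e else 0) = 0 := by
    have hsplit : (∑ e, if c (G.tail e) = C then Z e else 0)
        = (∑ e, if c (G.tail e) = C ∧ c (G.head e) = C then Z e else 0)
          + ∑ e, if c (G.tail e) = C ∧ c (G.head e) ≠ C then Z e else 0 := by
      rw [← Finset.sum_add_distrib]
      apply Finset.sum_congr rfl
      intro e _
      by_cases h1 : c (G.tail e) = C <;> by_cases h2 : c (G.head e) = C <;>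
        simp [h1, h2]
    rw [hS1] at hsplit
    omega
  -- turn it into an equality of the swept vector and the gradient on the boundary
  have hXg : (∑ e, if c (G.tail e) = C ∧ c (G.head e) ≠ C then AAX G σ n e else 0)
      = ∑ e, if c (G.tail e) = C ∧ c (G.head e) ≠ C
          then c (G.tail e) - c (G.head e) else 0 := by
    have : (∑ e, if c (G.tail e) = C ∧ c (G.head e) ≠ C then Z e else 0)
        = (∑ e, if c (G.tail e) = C ∧ c (G.head e) ≠ C then AAX G σ n e else 0)
          - ∑ e, if c (G.tail e) = C ∧ c (G.head e) ≠ C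
              then c (G.tail e) - c (G.head e) else 0 := by
      rw [← Finset.sum_sub_distrib]
      apply Finset.sum_congr rfl
      intro e _
      split <;> simp [hZdef]
    rw [hbd] at this
    omega
  -- each boundary dart is swept
  have key : ∀ e, c (G.tail e) = C → c (G.head e) ≠ C → AASwp G σ n e := by
    have hone : (∑ e, if c (G.tail e) = C ∧ c (G.head e) ≠ C then (1:ℤ) else 0)
        ≤ ∑ e, if c (G.tail e) = C ∧ c (G.head e) ≠ C
            then c (G.tail e) - c (G.head e) else 0 := by
      apply Finset.sum_le_sum
      intro e _
      split
      · rename_i hsp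
        have h1 := hsp.1
        have h2 := hsp.2
        have h3 := hmax' (G.head e)
        omega
      · exact le_rfl
    have htwo : (∑ e, if c (G.tail e) = C ∧ c (G.head e) ≠ C then AAX G σ n e else 0)
        ≤ ∑ e, if c (G.tail e) = C ∧ c (G.head e) ≠ C then (1:ℤ) else 0 := by
      apply Finset.sum_le_sum
      intro e _
      split
      · exact AAX_le_one G σ n e
      · exact le_rfl
    have hEq : (∑ e, ((if c (G.tail e) = C ∧ c (G.head e) ≠ C then (1:ℤ) else 0)
        - (if c (G.tail e) = C ∧ c (G.head e) ≠ C then AAX G σ n e else 0))) = 0 := by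
      rw [Finset.sum_sub_distrib]
      omega
    have hterm := (Finset.sum_eq_zero_iff_of_nonneg (fun e _ => by
      split
      · have := AAX_le_one G σ n e
        omega
      · exact le_rfl)).mp hEq
    intro e h1 h2
    have he := hterm e (Finset.mem_univ e)
    rw [if_pos ⟨h1, h2⟩, if_pos ⟨h1, h2⟩] at he
    exact AAX_eq_one G σ n e (by omega)
  -- the maximum set is closed under rotor heads
  have hclose : ∀ u, u ≠ v → c u = C → c (G.head (σ u)) = C := by
    intro u hu hcu
    by_contra hne
    obtain ⟨i, hi1, hi2, hit⟩ := key (σ u) (by rwa [hσ u hu]) hne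
    rw [hσ u hu] at hi2 hit
    exact hns u i hi1 hi2 hit
  -- hence the root attains the maximum
  have hv : c v = C := by
    by_cases h0 : u₀ = v
    · rw [← h0]
    · have hchain : ∀ a b : G.V,
          Relation.ReflTransGen (fun a b => a ≠ v ∧ G.head (σ a) = b) a b →
            c a = C → c b = C := by
        intro a b h
        induction h with
        | refl => exact id
        | tail h1 h2 ih =>
            intro hca
            obtain ⟨hne, hhd⟩ := h2
            rw [← hhd]
            exact hclose _ hne (ih hca)
      exact hchain u₀ v (hreach u₀ h0) rfl
  refine ⟨fun u => ?_, fun e h1 h2 => ?_⟩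
  · rw [hv]
    exact hmax' u
  · exact key e (h1.trans hv) (fun hc => h2 (hc.trans hv.symm))
lemma AA_exists_period (d : G.D) : ∃ m, 1 ≤ m ∧ (⇑G.next)^[m] d = d := by
  refine ⟨orderOf G.next, orderOf_pos G.next, ?_⟩
  have h : G.next ^ orderOf G.next = 1 := pow_orderOf_eq_one G.next
  calc (⇑G.next)^[orderOf G.next] d = (G.next ^ orderOf G.next) d := rfl
    _ = d := by rw [h]; rfl

lemma AA_iter_mul (d : G.D) (L q : ℕ) (hLp : (⇑G.next)^[L] d = d) :
    (⇑G.next)^[L * q] d = d := by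
  induction q with
  | zero => rfl
  | succ t ih =>
      rw [Nat.mul_succ, Function.iterate_add_apply, hLp, ih]

lemma AA_cycle_surj (d e : G.D) (L : ℕ) (hL1 : 1 ≤ L)
    (hLp : (⇑G.next)^[L] d = d) (h : G.tail d = G.tail e) :
    ∃ m, 1 ≤ m ∧ m ≤ L ∧ (⇑G.next)^[m] d = e := by
  have hsc := G.next_cyclic d e h
  obtain ⟨i, -, -, hie⟩ := Equiv.Perm.SameCycle.exists_pow_eq'' hsc
  have hie' : (⇑G.next)^[i] d = e := hie
  by_cases h0 : i % L = 0
  · have hd : (⇑G.next)^[i] d = d := by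
      have hdm := Nat.div_add_mod i L
      rw [h0, Nat.add_zero] at hdm
      rw [← hdm]
      exact AA_iter_mul G d L (i / L) hLp
    exact ⟨L, hL1, le_rfl, by rw [hLp, ← hie', hd]⟩
  · refine ⟨i % L, Nat.one_le_iff_ne_zero.mpr h0,
      le_of_lt (Nat.mod_lt i (by omega)), ?_⟩
    have hsplit : i % L + L * (i / L) = i := Nat.mod_add_div i L
    have hred : (⇑G.next)^[i] d = (⇑G.next)^[i % L] d := by
      conv_lhs => rw [← hsplit]
      rw [Function.iterate_add_apply, AA_iter_mul G d L (i / L) hLp]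
    rw [← hie', hred]

lemma AA_cycle_inj (d : G.D) (L : ℕ)
    (hLmin : ∀ t, 1 ≤ t → t < L → (⇑G.next)^[t] d ≠ d) :
    ∀ i j, 1 ≤ i → i ≤ L → 1 ≤ j → j ≤ L →
      (⇑G.next)^[i] d = (⇑G.next)^[j] d → i = j := by
  have key : ∀ i j, i ≤ j → 1 ≤ i → j ≤ L →
      (⇑G.next)^[i] d = (⇑G.next)^[j] d → i = j := by
    intro i j hij h1 hjL heq
    by_contra hne
    have hcan : (⇑G.next)^[i] ((⇑G.next)^[j - i] d) = (⇑G.next)^[i] d := by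
      rw [← Function.iterate_add_apply]
      have hji : i + (j - i) = j := by omega
      rw [hji, ← heq]
    exact hLmin (j - i) (by omega) (by omega) ((G.next.injective.iterate i) hcan)
  intro i j h1 h2 h3 h4 heq
  rcases le_total i j with h | h
  · exact key i j h h1 h4 heq
  · exact (key j i h h3 h2 heq.symm).symm

lemma AA_swap_not (d d' : G.D) (K L : ℕ) (hK1 : 1 ≤ K) (hKL : K < L)
    (hL1 : 1 ≤ L) (hLp : (⇑G.next)^[L] d = d)
    (hLmin : ∀ t, 1 ≤ t → t < L → (⇑G.next)^[t] d ≠ d)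
    (hd' : (⇑G.next)^[K] d = d') (e : G.D) (he : G.tail d = G.tail e) :
    ((∃ i, 1 ≤ i ∧ i ≤ K ∧ (⇑G.next)^[i] d = e) ↔
      ¬ (∃ j, 1 ≤ j ∧ j ≤ L - K ∧ (⇑G.next)^[j] d' = e)) := by
  have inj := AA_cycle_inj G d L hLmin
  constructor
  · rintro ⟨i, hi1, hi2, hie⟩ ⟨j, hj1, hj2, hje⟩
    have hjK : (⇑G.next)^[j + K] d = e := by
      rw [Function.iterate_add_apply, hd', hje]
    have := inj i (j + K) hi1 (by omega) (by omega) (by omega)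
      (hie.trans hjK.symm)
    omega
  · intro hno
    obtain ⟨m, hm1, hm2, hme⟩ := AA_cycle_surj G d e L hL1 hLp he
    by_cases hmK : m ≤ K
    · exact ⟨m, hm1, hmK, hme⟩
    · exfalso
      apply hno
      refine ⟨m - K, by omega, by omega, ?_⟩
      rw [← hd', ← Function.iterate_add_apply]
      have hmk : m - K + K = m := by omega
      rw [hmk, hme]

lemma AA_ns2 (d d' : G.D) (K L : ℕ) (hK1 : 1 ≤ K) (hKL : K < L)
    (hLmin : ∀ t, 1 ≤ t → t < L → (⇑G.next)^[t] d ≠ d)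
    (hd' : (⇑G.next)^[K] d = d') :
    ∀ j, 1 ≤ j → j ≤ L - K → (⇑G.next)^[j] d' ≠ d' := by
  intro j hj1 hj2 heq
  have h1 : (⇑G.next)^[j + K] d = (⇑G.next)^[K] d := by
    rw [Function.iterate_add_apply, hd', heq]
  have := AA_cycle_inj G d L hLmin (j + K) K (by omega) (by omega)
    (by omega) (by omega) h1
  omega
/-- Totalize a rotor configuration using a junk dart at the basepoint. -/
noncomputable def AAtot (v : G.V) (d₀ : G.D) (ρ : G.RotorConfig v) : G.V → G.D :=
  fun u => if h : u = v then d₀ else ρ.1 u h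

lemma AAtot_ne (v : G.V) (d₀ : G.D) (ρ : G.RotorConfig v) (u : G.V) (hu : u ≠ v) :
    AAtot G v d₀ ρ u = ρ.1 u hu := dif_neg hu

lemma AAtot_tail (v : G.V) (d₀ : G.D) (ρ : G.RotorConfig v) (u : G.V) (hu : u ≠ v) :
    G.tail (AAtot G v d₀ ρ u) = u := by
  rw [AAtot_ne G v d₀ ρ u hu]
  exact ρ.2 u hu

lemma AA_reach (v : G.V) (T : Finset G.D) (ρ : G.RotorConfig v)
    (hρ : G.TowardRoot v T ρ) (d₀ : G.D) :
    ∀ u, u ≠ v → Relation.ReflTransGen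
      (fun a b => a ≠ v ∧ G.head (AAtot G v d₀ ρ a) = b) u v := by
  intro u hu
  refine Relation.ReflTransGen.mono ?_ u v ((hρ u hu).2)
  rintro a b ⟨ha, hh⟩
  exact ⟨ha, by rw [AAtot_ne G v d₀ ρ a ha]; exact hh⟩

lemma AA_no2cycle (v : G.V) (σ : G.V → G.D)
    (hreach : ∀ u, u ≠ v →
      Relation.ReflTransGen (fun a b => a ≠ v ∧ G.head (σ a) = b) u v)
    (u w : G.V) (hu : u ≠ v) (hw : w ≠ v)
    (h1 : G.head (σ u) = w) (h2 : G.head (σ w) = u) : False := by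
  have key : ∀ a b, Relation.ReflTransGen (fun a b => a ≠ v ∧ G.head (σ a) = b) a b →
      (a = u ∨ a = w) → (b = u ∨ b = w) := by
    intro a b h
    induction h with
    | refl => exact id
    | tail hab hbc ih =>
        intro ha
        obtain ⟨hne, hhd⟩ := hbc
        rcases ih ha with h | h
        · right; rw [← hhd, h]; exact h1
        · left; rw [← hhd, h]; exact h2
  rcases key u v (hreach u hu) (Or.inl rfl) with h | h
  · exact hu h.symm
  · exact hw h.symm

lemma AA_chain_exists (v : G.V) (σ : G.V → G.D) (a : G.V)
    (h : Relation.ReflTransGen (fun a b => a ≠ v ∧ G.head (σ a) = b) a v) :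
    ∃ m, (fun u => if u = v then v else G.head (σ u))^[m] a = v := by
  induction h using Relation.ReflTransGen.head_induction_on with
  | refl => exact ⟨0, rfl⟩
  | head step h ih =>
      obtain ⟨m, hm⟩ := ih
      obtain ⟨hne, hhd⟩ := step
      refine ⟨m + 1, ?_⟩
      rw [Function.iterate_succ_apply]
      rw [if_neg hne, hhd]
      exact hm

/-- The darts of a spanning tree are exactly the rotor darts of any
configuration oriented toward the root, together with their reversals. -/
lemma AA_tree_eq (v : G.V) (T : Finset G.D) (hT : G.IsSpanningTree T)
    (d₀ : G.D) (ρ : G.RotorConfig v) (hρ : G.TowardRoot v T ρ) :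
    T = ((Finset.univ.erase v).image (AAtot G v d₀ ρ)) ∪
        ((Finset.univ.erase v).image (fun u => G.rev (AAtot G v d₀ ρ u))) := by
  set f := AAtot G v d₀ ρ with hf
  have hft : ∀ u, u ≠ v → G.tail (f u) = u := fun u hu => AAtot_tail G v d₀ ρ u hu
  have hreach := AA_reach G v T ρ hρ d₀
  have hfT : ∀ u, u ≠ v → f u ∈ T := by
    intro u hu
    rw [hf, AAtot_ne G v d₀ ρ u hu]
    exact (hρ u hu).1
  have hsub : ((Finset.univ.erase v).image f) ∪
      ((Finset.univ.erase v).image (fun u => G.rev (f u))) ⊆ T := by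
    apply Finset.union_subset
    · intro d hd
      obtain ⟨u, hu, rfl⟩ := Finset.mem_image.mp hd
      exact hfT u (Finset.ne_of_mem_erase hu)
    · intro d hd
      obtain ⟨u, hu, rfl⟩ := Finset.mem_image.mp hd
      exact hT.1 _ (hfT u (Finset.ne_of_mem_erase hu))
  have hinj : Set.InjOn f (Finset.univ.erase v) := by
    intro a ha b hb hab
    have ha' := Finset.ne_of_mem_erase ha
    have hb' := Finset.ne_of_mem_erase hb
    rw [← hft a ha', ← hft b hb', hab]
  have hinj2 : Set.InjOn (fun u => G.rev (f u)) (Finset.univ.erase v) := by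
    intro a ha b hb hab
    exact hinj ha hb (G.rev_invol.injective hab)
  have hdisj : Disjoint ((Finset.univ.erase v).image f)
      ((Finset.univ.erase v).image (fun u => G.rev (f u))) := by
    rw [Finset.disjoint_left]
    rintro d hd1 hd2
    obtain ⟨u, hu, rfl⟩ := Finset.mem_image.mp hd1
    obtain ⟨w, hw, hw2⟩ := Finset.mem_image.mp hd2
    have hu' := Finset.ne_of_mem_erase hu
    have hw' := Finset.ne_of_mem_erase hw
    -- f u = rev (f w)
    have hrev : f u = G.rev (f w) := hw2.symm
    have e1 : G.head (f w) = u := by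
      have : G.tail (f u) = u := hft u hu'
      rw [hrev, AA_tail_rev] at this
      exact this
    have e2 : G.head (f u) = w := by
      rw [hrev]
      have : G.head (G.rev (f w)) = G.tail (f w) := rfl
      rw [this, hft w hw']
    exact AA_no2cycle G v f hreach u w hu' hw' e2 e1
  have hcard : (((Finset.univ.erase v).image f) ∪
      ((Finset.univ.erase v).image (fun u => G.rev (f u)))).card
        = 2 * (Fintype.card G.V - 1) := by
    rw [Finset.card_union_of_disjoint hdisj,
      Finset.card_image_of_injOn hinj, Finset.card_image_of_injOn hinj2,
      Finset.card_erase_of_mem (Finset.mem_univ v), Finset.card_univ]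
    ring
  exact (Finset.eq_of_subset_of_card_le hsub (by rw [hcard, hT.2.2])).symm

/-- Uniqueness of the rotor configuration oriented toward the root. -/
lemma AA_unique (v : G.V) (T : Finset G.D) (hT : G.IsSpanningTree T)
    (d₀ : G.D) (ρ π : G.RotorConfig v)
    (hρ : G.TowardRoot v T ρ) (hπ : G.TowardRoot v T π) :
    ∀ u (hu : u ≠ v), ρ.1 u hu = π.1 u hu := by
  set f := AAtot G v d₀ ρ with hfdef
  set p := AAtot G v d₀ π with hpdef
  have hft : ∀ u, u ≠ v → G.tail (f u) = u := fun u hu => AAtot_tail G v d₀ ρ u hu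
  have hpt : ∀ u, u ≠ v → G.tail (p u) = u := fun u hu => AAtot_tail G v d₀ π u hu
  have hreachρ := AA_reach G v T ρ hρ d₀
  have hreachπ := AA_reach G v T π hπ d₀
  -- it suffices to prove equality of the totalized configurations off `v`
  suffices h : ∀ u, u ≠ v → p u = f u by
    intro u hu
    have := h u hu
    rw [hfdef, hpdef, AAtot_ne G v d₀ ρ u hu, AAtot_ne G v d₀ π u hu] at this
    exact this.symm
  -- the bad set
  by_contra hbad
  push_neg at hbad
  obtain ⟨u₁, hu₁, hne₁⟩ := hbad
  -- chain length function for ρ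
  set g : G.V → G.V := fun u => if u = v then v else G.head (f u) with hg
  have hgiter : ∀ u, u ≠ v → ∃ m, g^[m] u = v := by
    intro u hu
    exact AA_chain_exists G v f u (hreachρ u hu)
  have hgv : ∃ m, g^[m] v = v := ⟨0, rfl⟩
  have hex : ∀ u : G.V, ∃ m, g^[m] u = v := by
    intro u
    by_cases hu : u = v
    · rw [hu]; exact hgv
    · exact hgiter u hu
  set ell : G.V → ℕ := fun u => Nat.find (hex u) with hell
  have hell_spec : ∀ u, g^[ell u] u = v := fun u => Nat.find_spec (hex u)
  have hell_lt : ∀ w, w ≠ v → ell (g w) < ell w := by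
    intro w hw
    have h1 : 1 ≤ ell w := by
      rcases Nat.eq_zero_or_pos (ell w) with h | h
      · exfalso
        have := hell_spec w
        rw [h] at this
        exact hw this
      · exact h
    have h2 : g^[ell w - 1] (g w) = v := by
      have hs := hell_spec w
      have heq : ell w = (ell w - 1) + 1 := by omega
      rw [heq, Function.iterate_succ_apply] at hs
      exact hs
    have h3 : ell (g w) ≤ ell w - 1 := Nat.find_min' (hex (g w)) h2
    omega
  -- the set of disagreement
  set B : Finset G.V := Finset.univ.filter (fun u => u ≠ v ∧ p u ≠ f u) with hB
  have hBne : B.Nonempty := by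
    refine ⟨u₁, ?_⟩
    rw [hB]
    exact Finset.mem_filter.mpr ⟨Finset.mem_univ _, hu₁, hne₁⟩
  obtain ⟨us, husB, hmaxB⟩ := Finset.exists_max_image B ell hBne
  have husB' := husB
  rw [hB] at husB'
  obtain ⟨-, husv, hnes⟩ := Finset.mem_filter.mp husB'
  have hTeq := AA_tree_eq G v T hT d₀ ρ hρ
  have hpT : p us ∈ T := by
    rw [hpdef, AAtot_ne G v d₀ π us husv]
    exact (hπ us husv).1
  rw [hTeq] at hpT
  rcases Finset.mem_union.mp hpT with hcase | hcase
  · obtain ⟨w, hw, hweq⟩ := Finset.mem_image.mp hcase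
    rw [← hfdef] at hweq
    have hw' := Finset.ne_of_mem_erase hw
    have hwu : w = us := by
      rw [← hft w hw', hweq, hpt us husv]
    rw [hwu] at hweq
    exact hnes hweq.symm
  · obtain ⟨w, hw, hweq⟩ := Finset.mem_image.mp hcase
    rw [← hfdef] at hweq
    have hw' := Finset.ne_of_mem_erase hw
    have e1 : G.head (f w) = us := by
      have hh := hpt us husv
      rw [← hweq, AA_tail_rev] at hh
      exact hh
    have e2 : G.head (p us) = w := by
      rw [← hweq]
      have hh : G.head (G.rev (f w)) = G.tail (f w) := rfl
      rw [hh, hft w hw']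
    have hwB : w ∈ B := by
      rw [hB]
      refine Finset.mem_filter.mpr ⟨Finset.mem_univ _, hw', ?_⟩
      intro hpw
      exact AA_no2cycle G v p hreachπ us w husv hw' e2 (by rw [hpw]; exact e1)
    have hgw : g w = us := by
      simp only [hg]
      rw [if_neg hw']
      exact e1
    have hlt := hell_lt w hw'
    rw [hgw] at hlt
    have hle := hmaxB w hwB
    omega
/-- Reachability of the root within `T` in at most `m` steps. -/
def AAQP (v : G.V) (T : Finset G.D) : ℕ → G.V → Prop
  | 0, u => u = v
  | (m + 1), u => u = v ∨ ∃ d, d ∈ T ∧ G.tail d = u ∧ AAQP v T m (G.head d)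

lemma AA_QP_exists (v : G.V) (T : Finset G.D) (u : G.V)
    (h : Relation.ReflTransGen (G.treeAdj T) u v) : ∃ m, AAQP G v T m u := by
  induction h using Relation.ReflTransGen.head_induction_on with
  | refl => exact ⟨0, rfl⟩
  | head step h ih =>
      obtain ⟨m, hm⟩ := ih
      obtain ⟨d, hdT, hdt, hdh⟩ := step
      exact ⟨m + 1, Or.inr ⟨d, hdT, hdt, by rw [hdh]; exact hm⟩⟩

/-- Every spanning tree admits a rotor configuration oriented toward the root. -/
lemma AA_exists_toward (v : G.V) (T : Finset G.D) (hT : G.IsSpanningTree T) :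
    ∃ ρ : G.RotorConfig v, G.TowardRoot v T ρ := by
  have hex : ∀ u : G.V, ∃ m, AAQP G v T m u :=
    fun u => AA_QP_exists G v T u (hT.2.1 u v)
  set dd : G.V → ℕ := fun u => Nat.find (hex u) with hdd
  have hstep : ∀ u, u ≠ v →
      ∃ d, d ∈ T ∧ G.tail d = u ∧ dd (G.head d) < dd u := by
    intro u hu
    have hspec := Nat.find_spec (hex u)
    have h1 : dd u ≠ 0 := by
      intro h0
      rw [show Nat.find (hex u) = dd u from rfl, h0] at hspec
      simp only [AAQP] at hspec
      exact hu hspec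
    obtain ⟨t, ht⟩ := Nat.exists_eq_succ_of_ne_zero h1
    rw [show Nat.find (hex u) = dd u from rfl, ht] at hspec
    simp only [AAQP] at hspec
    rcases hspec with h | ⟨d, hdT, hdt, hdh⟩
    · exact absurd h hu
    · refine ⟨d, hdT, hdt, ?_⟩
      have hmin : dd (G.head d) ≤ t := Nat.find_min' (hex (G.head d)) hdh
      omega
  choose σf hσT hσt hσd using hstep
  refine ⟨⟨fun u hu => σf u hu, fun u hu => hσt u hu⟩, ?_⟩
  intro u hu
  refine ⟨hσT u hu, ?_⟩
  have main : ∀ m, ∀ u, ∀ hu : u ≠ v, dd u ≤ m →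
      Relation.ReflTransGen
        (fun a b => ∃ ha : a ≠ v, G.head (σf a ha) = b) u v := by
    intro m
    induction m with
    | zero =>
        intro u hu hle
        have hspec := Nat.find_spec (hex u)
        have h0 : Nat.find (hex u) = 0 := Nat.le_zero.mp hle
        rw [h0] at hspec
        simp only [AAQP] at hspec
        exact absurd hspec hu
    | succ m ih =>
        intro u hu hle
        by_cases hhv : G.head (σf u hu) = v
        · exact Relation.ReflTransGen.single ⟨hu, hhv⟩
        · have hlt := hσd u hu
          exact Relation.ReflTransGen.head ⟨hu, rfl⟩
            (ih (G.head (σf u hu)) hhv (by omega))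
  exact main (dd u) u hu le_rfl
lemma AA_cnt (v : G.V) (σ : G.V → G.D) (n : G.V → ℕ)
    (hσt : ∀ u, u ≠ v → G.tail (σ u) = u) (hn0 : n v = 0)
    (hinj : ∀ u i j, 1 ≤ i → i ≤ n u → 1 ≤ j → j ≤ n u →
      (⇑G.next)^[i] (σ u) = (⇑G.next)^[j] (σ u) → i = j)
    (u : G.V) (F : G.D → ℤ) :
    (∑ e, if G.tail e = u ∧ AASwp G σ n e then F e else 0)
      = if u = v then 0
        else ∑ i ∈ Finset.range (n u), F ((⇑G.next)^[i + 1] (σ u)) := by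
  by_cases huv : u = v
  · rw [if_pos huv]
    apply Finset.sum_eq_zero
    intro e _
    rw [if_neg]
    rintro ⟨h1, i, hi1, hi2, -⟩
    rw [h1, huv, hn0] at hi2
    omega
  · rw [if_neg huv, ← Finset.sum_filter]
    have himg : Finset.univ.filter (fun e => G.tail e = u ∧ AASwp G σ n e)
        = (Finset.range (n u)).image (fun i => (⇑G.next)^[i + 1] (σ u)) := by
      ext e
      simp only [Finset.mem_filter, Finset.mem_univ, true_and, Finset.mem_image,
        Finset.mem_range]
      constructor
      · rintro ⟨h1, i, hi1, hi2, hie⟩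
        rw [h1] at hi2 hie
        refine ⟨i - 1, by omega, ?_⟩
        have : i - 1 + 1 = i := by omega
        rw [this, hie]
      · rintro ⟨i, hi, rfl⟩
        have ht : G.tail ((⇑G.next)^[i + 1] (σ u)) = u := by
          rw [AA_tail_iterate, hσt u huv]
        refine ⟨ht, i + 1, by omega, ?_, ?_⟩
        · rw [ht]; omega
        · rw [ht]
    rw [himg, Finset.sum_image]
    intro i hi j hj hij
    have hi' := Finset.mem_range.mp hi
    have hj' := Finset.mem_range.mp hj
    have := hinj u (i + 1) (j + 1) (by omega) (by omega) (by omega) (by omega) hij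
    omega
lemma AA_compW (v : G.V) (σ : G.V → G.D) (n : G.V → ℕ)
    (hσt : ∀ u, u ≠ v → G.tail (σ u) = u) (hn0 : n v = 0)
    (hinj : ∀ u i j, 1 ≤ i → i ≤ n u → 1 ≤ j → j ≤ n u →
      (⇑G.next)^[i] (σ u) = (⇑G.next)^[j] (σ u) → i = j)
    (w : G.V) :
    G.bMap (AAX G σ n) w
      = ∑ u, if u = v then 0
          else ∑ i ∈ Finset.range (n u),
            G.unitDivFun (G.head ((⇑G.next)^[i + 1] (σ u))) u w := by
  have hL : G.bMap (AAX G σ n) w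
      = (∑ e, if G.head e = w then (if AASwp G σ n e then (1:ℤ) else 0) else 0)
        - ∑ e, if G.head e = w then (if AASwp G σ n (G.rev e) then (1:ℤ) else 0) else 0 := by
    rw [AA_bMap_apply, ← Finset.sum_sub_distrib]
    apply Finset.sum_congr rfl
    intro e _
    simp only [AAX]
    by_cases h : G.head e = w
    · rw [if_pos h, if_pos h, if_pos h]
    · rw [if_neg h, if_neg h, if_neg h]
      ring
  have hT2 : (∑ e, if G.head e = w then (if AASwp G σ n (G.rev e) then (1:ℤ) else 0) else 0)
      = ∑ e, if G.tail e = w ∧ AASwp G σ n e then (1:ℤ) else 0 := by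
    rw [← AA_sum_rev G
      (fun e => if G.head e = w then (if AASwp G σ n (G.rev e) then (1:ℤ) else 0) else 0)]
    apply Finset.sum_congr rfl
    intro e _
    have hh : G.head (G.rev e) = G.tail e := rfl
    rw [hh, G.rev_invol e]
    by_cases h1 : G.tail e = w <;> by_cases h2 : AASwp G σ n e <;>
      simp [h1, h2]
  have hT2' : (∑ e, if G.tail e = w ∧ AASwp G σ n e then (1:ℤ) else 0)
      = if w = v then 0 else (n w : ℤ) := by
    rw [AA_cnt G v σ n hσt hn0 hinj w (fun _ => (1:ℤ))]
    by_cases h : w = v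
    · rw [if_pos h, if_pos h]
    · rw [if_neg h, if_neg h, Finset.sum_const, Finset.card_range, nsmul_eq_mul,
        mul_one]
  have hT1 : (∑ e, if G.head e = w then (if AASwp G σ n e then (1:ℤ) else 0) else 0)
      = ∑ u, if u = v then 0
          else ∑ i ∈ Finset.range (n u),
            (if G.head ((⇑G.next)^[i + 1] (σ u)) = w then (1:ℤ) else 0) := by
    have h0 : ∀ e : G.D, (if G.head e = w then (if AASwp G σ n e then (1:ℤ) else 0) else 0)
        = ∑ u, if G.tail e = u ∧ AASwp G σ n e
            then (if G.head e = w then (1:ℤ) else 0) else 0 := by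
      intro e
      rw [Finset.sum_eq_single_of_mem (G.tail e) (Finset.mem_univ _)
        (fun u _ hu => if_neg (fun hc => hu hc.1.symm))]
      by_cases h1 : AASwp G σ n e <;> by_cases h2 : G.head e = w <;>
        simp [h1, h2]
    rw [Finset.sum_congr rfl (fun e _ => h0 e), Finset.sum_comm]
    apply Finset.sum_congr rfl
    intro u _
    exact AA_cnt G v σ n hσt hn0 hinj u (fun e => if G.head e = w then (1:ℤ) else 0)
  have h2 : (∑ u, if u = v then (0:ℤ)
      else ∑ i ∈ Finset.range (n u), (if w = u then (1:ℤ) else 0))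
      = if w = v then 0 else (n w : ℤ) := by
    rw [Finset.sum_eq_single_of_mem w (Finset.mem_univ _)]
    · by_cases h : w = v
      · rw [if_pos h, if_pos h]
      · rw [if_neg h, if_neg h]
        simp
    · intro u _ hu
      by_cases h : u = v
      · rw [if_pos h]
      · rw [if_neg h]
        apply Finset.sum_eq_zero
        intro i _
        exact if_neg (fun hc => hu hc.symm)
  have hR : (∑ u, if u = v then 0
      else ∑ i ∈ Finset.range (n u),
        G.unitDivFun (G.head ((⇑G.next)^[i + 1] (σ u))) u w)
      = (∑ u, if u = v then 0
          else ∑ i ∈ Finset.range (n u),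
            (if G.head ((⇑G.next)^[i + 1] (σ u)) = w then (1:ℤ) else 0))
        - ∑ u, if u = v then (0:ℤ)
            else ∑ i ∈ Finset.range (n u), (if w = u then (1:ℤ) else 0) := by
    rw [← Finset.sum_sub_distrib]
    apply Finset.sum_congr rfl
    intro u _
    by_cases h : u = v
    · rw [if_pos h, if_pos h, if_pos h]
      ring
    · rw [if_neg h, if_neg h, if_neg h, ← Finset.sum_sub_distrib]
      apply Finset.sum_congr rfl
      intro i _
      show (if w = G.head ((⇑G.next)^[i + 1] (σ u)) then (1:ℤ) else 0)
          - (if w = u then 1 else 0) = _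
      by_cases ha : w = G.head ((⇑G.next)^[i + 1] (σ u))
      · rw [if_pos ha, if_pos ha.symm]
      · rw [if_neg ha,
          if_neg (show ¬(G.head ((⇑G.next)^[i + 1] (σ u)) = w) from fun hc => ha hc.symm)]
  rw [hL, hT2, hT2', hT1, hR, h2]
lemma AALc_single (u : G.V) (w : G.V) : AALc G (Pi.single u 1) w = G.prin u w := by
  unfold AALc
  rw [Finset.sum_eq_single_of_mem u (Finset.mem_univ _)]
  · rw [Pi.single_eq_same, one_mul]
  · intro z _ hz
    rw [Pi.single_eq_of_ne hz, zero_mul]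

lemma AALc_sub (a b : G.V → ℤ) (w : G.V) :
    AALc G (a - b) w = AALc G a w - AALc G b w := by
  unfold AALc
  rw [← Finset.sum_sub_distrib]
  apply Finset.sum_congr rfl
  intro z _
  rw [Pi.sub_apply, sub_mul]

lemma AA_prin_repr (x : G.V → ℤ) (hx : x ∈ G.Prin) :
    ∃ c : G.V → ℤ, ∀ w, x w = AALc G c w := by
  let S : AddSubgroup (G.V → ℤ) :=
    { carrier := {y | ∃ c, ∀ w, y w = AALc G c w}
      zero_mem' := ⟨0, fun w => by simp [AALc]⟩
      add_mem' := by
        rintro a b ⟨ca, hca⟩ ⟨cb, hcb⟩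
        refine ⟨ca + cb, fun w => ?_⟩
        have h : AALc G (ca + cb) w = AALc G ca w + AALc G cb w := by
          unfold AALc
          rw [← Finset.sum_add_distrib]
          apply Finset.sum_congr rfl
          intro z _
          rw [Pi.add_apply, add_mul]
        rw [h, Pi.add_apply, hca w, hcb w]
      neg_mem' := by
        rintro a ⟨ca, hca⟩
        refine ⟨-ca, fun w => ?_⟩
        have h : AALc G (-ca) w = - AALc G ca w := by
          unfold AALc
          rw [← Finset.sum_neg_distrib]
          apply Finset.sum_congr rfl
          intro z _
          rw [Pi.neg_apply, neg_mul]
        rw [h, Pi.neg_apply, hca w] }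
  have hle : G.Prin ≤ S := by
    rw [Multigraph.Prin, AddSubgroup.closure_le]
    rintro y ⟨u, rfl⟩
    exact ⟨Pi.single u 1, fun w => (AALc_single G u w).symm⟩
  exact hle hx

/-- The quotient map onto the sandpile group, as a homomorphism. -/
noncomputable def AAmk : G.Div0 →+ G.Jac :=
  QuotientAddGroup.mk' (G.Prin.addSubgroupOf G.Div0)

lemma AAmk_eq (D : G.Div0) : G.divClass D = AAmk G D := rfl

lemma AAmk_zero (D : G.Div0) (h : AAmk G D = 0) : (D : G.V → ℤ) ∈ G.Prin := by
  have h2 := (QuotientAddGroup.eq_zero_iff D).mp h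
  exact (AddSubgroup.mem_addSubgroupOf).mp h2
lemma AA_forward (hconn : G.Connected) (hloop : G.Loopless) (v : G.V)
    (T T' : Finset G.D) (hT : G.IsSpanningTree T) (hT' : G.IsSpanningTree T')
    (ρ ρ' : G.RotorConfig v) (hρ : G.TowardRoot v T ρ) (hρ' : G.TowardRoot v T' ρ')
    (hzero : (∑ u : G.V, if hu : u = v then 0
        else G.dartAngle (ρ.1 u hu) (ρ'.1 u hu)) = (0 : G.Jac)) :
    T = T' := by
  classical
  -- trivial case: a single vertex
  by_cases hall : ∀ u : G.V, u = v
  · have hcV : Fintype.card G.V = 1 :=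
      Fintype.card_eq_one_iff.mpr ⟨v, fun u => hall u⟩
    have h1 : T.card = 0 := by rw [hT.2.2, hcV]
    have h2 : T'.card = 0 := by rw [hT'.2.2, hcV]
    rw [Finset.card_eq_zero.mp h1, Finset.card_eq_zero.mp h2]
  push_neg at hall
  obtain ⟨u₁, hu₁⟩ := hall
  -- a junk dart
  obtain ⟨d₀⟩ : Nonempty G.D := by
    rcases (Relation.ReflTransGen.cases_head (hconn u₁ v)) with h | ⟨b, hadj, -⟩
    · exact absurd h hu₁
    · obtain ⟨d, -, -⟩ := hadj
      exact ⟨d⟩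
  -- totalized rotor configurations
  set σ : G.V → G.D := AAtot G v d₀ ρ with hσdef
  set σ' : G.V → G.D := AAtot G v d₀ ρ' with hσ'def
  have hσt : ∀ u, u ≠ v → G.tail (σ u) = u := fun u hu => AAtot_tail G v d₀ ρ u hu
  have hσ't : ∀ u, u ≠ v → G.tail (σ' u) = u := fun u hu => AAtot_tail G v d₀ ρ' u hu
  have hreachσ := AA_reach G v T ρ hρ d₀
  have hreachσ' := AA_reach G v T' ρ' hρ' d₀
  -- the angles
  have hk : ∀ u, u ≠ v → ∃ k, (⇑G.next)^[k] (σ u) = σ' u := by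
    intro u hu
    have hsc := G.next_cyclic (σ u) (σ' u) (by rw [hσt u hu, hσ't u hu])
    obtain ⟨i, -, -, hie⟩ := Equiv.Perm.SameCycle.exists_pow_eq'' hsc
    exact ⟨i, hie⟩
  set n : G.V → ℕ := fun u => if hu : u = v then 0 else Nat.find (hk u hu) with hndef
  have hn0 : n v = 0 := dif_pos rfl
  have hnspec : ∀ u, ∀ hu : u ≠ v, (⇑G.next)^[n u] (σ u) = σ' u := by
    intro u hu
    have h : n u = Nat.find (hk u hu) := dif_neg hu
    rw [h]
    exact Nat.find_spec (hk u hu)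
  -- the periods
  set L : G.V → ℕ := fun u => Nat.find (AA_exists_period G (σ u)) with hLdef
  have hL1 : ∀ u, 1 ≤ L u := fun u => (Nat.find_spec (AA_exists_period G (σ u))).1
  have hLp : ∀ u, (⇑G.next)^[L u] (σ u) = σ u :=
    fun u => (Nat.find_spec (AA_exists_period G (σ u))).2
  have hLmin : ∀ u t, 1 ≤ t → t < L u → (⇑G.next)^[t] (σ u) ≠ σ u := by
    intro u t h1 h2 heq
    exact Nat.find_min (AA_exists_period G (σ u)) h2 ⟨h1, heq⟩
  have hKL : ∀ u, u ≠ v → n u < L u := by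
    intro u hu
    by_contra hge
    push_neg at hge
    have heq : (⇑G.next)^[n u - L u] (σ u) = σ' u := by
      have h4 : n u - L u + L u = n u := by omega
      calc (⇑G.next)^[n u - L u] (σ u)
          = (⇑G.next)^[n u - L u] ((⇑G.next)^[L u] (σ u)) := by rw [hLp u]
        _ = (⇑G.next)^[n u] (σ u) := by
            rw [← Function.iterate_add_apply, h4]
        _ = σ' u := hnspec u hu
    have hlt : n u - L u < n u := by
      have := hL1 u
      omega
    have hn' : n u = Nat.find (hk u hu) := dif_neg hu
    rw [hn'] at hlt heq
    exact Nat.find_min (hk u hu) hlt heq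
  -- injectivity within the swept window
  have hinjσ : ∀ u i j, 1 ≤ i → i ≤ n u → 1 ≤ j → j ≤ n u →
      (⇑G.next)^[i] (σ u) = (⇑G.next)^[j] (σ u) → i = j := by
    intro u i j h1 h2 h3 h4 heq
    by_cases hu : u = v
    · rw [hu, hn0] at h2
      omega
    · have h5 := hKL u hu
      exact AA_cycle_inj G (σ u) (L u) (hLmin u) i j h1 (by omega) h3 (by omega) heq
  have hns₁ : ∀ u i, 1 ≤ i → i ≤ n u → (⇑G.next)^[i] (σ u) ≠ σ u := by
    intro u i h1 h2
    by_cases hu : u = v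
    · rw [hu, hn0] at h2
      omega
    · have h5 := hKL u hu
      exact hLmin u i h1 (by omega)
  -- the angle divisor
  set W0 : G.Div0 := ∑ u : G.V, (if hu : u = v then 0
      else ∑ i ∈ Finset.range (n u),
        G.unitDiv (G.head ((⇑G.next)^[i + 1] (σ u)))
          (G.tail ((⇑G.next)^[i + 1] (σ u)))) with hW0def
  -- the treeAngle sum equals the class of W0
  have hsum : (∑ u : G.V, if hu : u = v then 0
      else G.dartAngle (ρ.1 u hu) (ρ'.1 u hu)) = AAmk G W0 := by
    rw [hW0def, map_sum]
    apply Finset.sum_congr rfl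
    intro u _
    by_cases hu : u = v
    · rw [dif_pos hu, dif_pos hu, map_zero]
    · rw [dif_neg hu, dif_neg hu, map_sum]
      have hσu : σ u = ρ.1 u hu := dif_neg hu
      have hσ'u : σ' u = ρ'.1 u hu := dif_neg hu
      have hex' : ∃ k, (⇑G.next)^[k] (ρ.1 u hu) = ρ'.1 u hu := by
        rw [← hσu, ← hσ'u]
        exact hk u hu
      rw [RibbonGraph.dartAngle, dif_pos hex']
      have hfind : Nat.find hex' = n u := by
        apply le_antisymm
        · apply Nat.find_min' hex'
          rw [← hσu, ← hσ'u]
          exact hnspec u hu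
        · have h : n u = Nat.find (hk u hu) := dif_neg hu
          rw [h]
          apply Nat.find_min' (hk u hu)
          rw [hσu, hσ'u]
          exact Nat.find_spec hex'
      rw [hfind]
      apply Finset.sum_congr rfl
      intro i _
      rw [← hσu]
      exact AAmk_eq G _
  rw [hsum] at hzero
  -- the angle divisor is principal
  obtain ⟨c, hc⟩ := AA_prin_repr G _ (AAmk_zero G W0 hzero)
  -- identify the coerced divisor with the boundary of the swept vector
  have hW0w : ∀ w, (W0 : G.V → ℤ) w = G.bMap (AAX G σ n) w := by
    intro w
    rw [AA_compW G v σ n hσt hn0 hinjσ w, hW0def]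
    have hcoe : ((∑ u : G.V, (if hu : u = v then 0
        else ∑ i ∈ Finset.range (n u),
          G.unitDiv (G.head ((⇑G.next)^[i + 1] (σ u)))
            (G.tail ((⇑G.next)^[i + 1] (σ u)))) : G.Div0) : G.V → ℤ)
        = ∑ u : G.V, (if hu : u = v then (0 : G.V → ℤ)
            else ∑ i ∈ Finset.range (n u),
              G.unitDivFun (G.head ((⇑G.next)^[i + 1] (σ u)))
                (G.tail ((⇑G.next)^[i + 1] (σ u)))) := by
      rw [AddSubmonoidClass.coe_finset_sum]
      apply Finset.sum_congr rfl
      intro u _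
      by_cases hu : u = v
      · rw [dif_pos hu, dif_pos hu]
        rfl
      · rw [dif_neg hu, dif_neg hu, AddSubmonoidClass.coe_finset_sum]
        rfl
    rw [hcoe, Finset.sum_apply]
    apply Finset.sum_congr rfl
    intro u _
    by_cases hu : u = v
    · rw [dif_pos hu, if_pos hu]
      rfl
    · rw [dif_neg hu, if_neg hu, Finset.sum_apply]
      apply Finset.sum_congr rfl
      intro i _
      rw [AA_tail_iterate, hσt u hu]
  have heq1 : ∀ w, G.bMap (AAX G σ n) w = AALc G c w := by
    intro w
    rw [← hW0w w]
    exact hc w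
  -- the complementary (swapped) system
  set n' : G.V → ℕ := fun u => if u = v then 0
    else (if 1 ≤ n u then L u - n u else 0) with hn'def
  have hn'eq : ∀ u, u ≠ v → 1 ≤ n u → n' u = L u - n u := by
    intro u hu h1
    show (if u = v then 0 else if 1 ≤ n u then L u - n u else 0) = L u - n u
    rw [if_neg hu, if_pos h1]
  have hn'z : ∀ u, ¬(u ≠ v ∧ 1 ≤ n u) → n' u = 0 := by
    intro u hu
    show (if u = v then 0 else if 1 ≤ n u then L u - n u else 0) = 0
    by_cases h : u = v
    · rw [if_pos h]
    · rw [if_neg h, if_neg (fun h1 => hu ⟨h, h1⟩)]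
  -- the swapped swept set is the complement of the original one in each star
  have hpart : ∀ e, AASwp G σ' n' e ↔
      (¬ AASwp G σ n e ∧ G.tail e ≠ v ∧ 1 ≤ n (G.tail e)) := by
    intro e
    by_cases hcond : G.tail e ≠ v ∧ 1 ≤ n (G.tail e)
    · obtain ⟨hune, hn1⟩ := hcond
      have hswap := AA_swap_not G (σ (G.tail e)) (σ' (G.tail e)) (n (G.tail e))
        (L (G.tail e)) hn1 (hKL _ hune) (hL1 _) (hLp _) (hLmin _)
        (hnspec _ hune) e (by rw [hσt _ hune])
      constructor
      · rintro ⟨j, hj1, hj2, hje⟩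
        rw [hn'eq _ hune hn1] at hj2
        exact ⟨fun hs => (hswap.mp hs) ⟨j, hj1, hj2, hje⟩, hune, hn1⟩
      · rintro ⟨hns, -, -⟩
        have h3 := (not_iff_not.mpr hswap).mp hns
        rw [not_not] at h3
        obtain ⟨j, hj1, hj2, hje⟩ := h3
        exact ⟨j, hj1, by rw [hn'eq _ hune hn1]; exact hj2, hje⟩
    · have hz : n' (G.tail e) = 0 := hn'z _ hcond
      constructor
      · rintro ⟨j, hj1, hj2, -⟩
        rw [hz] at hj2
        omega
      · rintro ⟨-, h1, h2⟩
        exact absurd ⟨h1, h2⟩ hcond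
  have hns₂ : ∀ u i, 1 ≤ i → i ≤ n' u → (⇑G.next)^[i] (σ' u) ≠ σ' u := by
    intro u i h1 h2
    by_cases hcond : u ≠ v ∧ 1 ≤ n u
    · rw [hn'eq u hcond.1 hcond.2] at h2
      exact AA_ns2 G (σ u) (σ' u) (n u) (L u) hcond.2 (hKL u hcond.1) (hLmin u)
        (hnspec u hcond.1) i h1 h2
    · rw [hn'z u hcond] at h2
      omega
  -- the pointwise identity X' = grad c₀ − X
  set c₀ : G.V → ℤ := fun u => if u ≠ v ∧ 1 ≤ n u then 1 else 0 with hc₀def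
  have hc₀app : ∀ z, c₀ z = if z ≠ v ∧ 1 ≤ n z then 1 else 0 := fun z => rfl
  have hX2 : ∀ e, AAX G σ' n' e
      = (c₀ (G.tail e) - c₀ (G.head e)) - AAX G σ n e := by
    have h1 : ∀ e, (if AASwp G σ' n' e then (1:ℤ) else 0)
        = c₀ (G.tail e) - (if AASwp G σ n e then 1 else 0) := by
      intro e
      by_cases hs : AASwp G σ n e
      · have hcond : G.tail e ≠ v ∧ 1 ≤ n (G.tail e) := by
          obtain ⟨i, hi1, hi2, -⟩ := hs
          constructor
          · intro hv
            rw [hv, hn0] at hi2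
            omega
          · omega
        rw [if_neg (fun hs' => ((hpart e).mp hs').1 hs), if_pos hs,
          hc₀app, if_pos hcond]
        ring
      · by_cases hcond : G.tail e ≠ v ∧ 1 ≤ n (G.tail e)
        · rw [if_pos ((hpart e).mpr ⟨hs, hcond.1, hcond.2⟩), if_neg hs,
            hc₀app, if_pos hcond]
          ring
        · rw [if_neg (fun hs' => hcond ⟨((hpart e).mp hs').2.1,
            ((hpart e).mp hs').2.2⟩), if_neg hs, hc₀app, if_neg hcond]
          ring
    intro e
    show (if AASwp G σ' n' e then (1:ℤ) else 0)
        - (if AASwp G σ' n' (G.rev e) then 1 else 0) = _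
    rw [h1 e, h1 (G.rev e), AA_tail_rev]
    show _ = (c₀ (G.tail e) - c₀ (G.head e)) -
      ((if AASwp G σ n e then (1:ℤ) else 0)
        - (if AASwp G σ n (G.rev e) then 1 else 0))
    ring
  have heq2 : ∀ w, G.bMap (AAX G σ' n') w = AALc G (c₀ - c) w := by
    intro w
    have hfun : AAX G σ' n'
        = (fun e => c₀ (G.tail e) - c₀ (G.head e)) - AAX G σ n := by
      funext e
      exact hX2 e
    rw [hfun, map_sub, Pi.sub_apply, AA_bMap_grad G hloop c₀ w, heq1 w]
    exact (AALc_sub G c₀ c w).symm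
  -- apply the extremal lemma to both systems
  obtain ⟨hiA, hiiA⟩ := AA_claimA G hloop v σ n c hσt hns₁ hreachσ heq1
  obtain ⟨hiB, -⟩ := AA_claimA G hloop v σ' n' (c₀ - c) hσ't hns₂ hreachσ' heq2
  -- vertices at the maximum have vanishing angle
  have key0 : ∀ u, c u = c v → n u = 0 := by
    intro u hcu
    by_contra h
    have h1 : 1 ≤ n u := by omega
    have hu : u ≠ v := by
      intro he
      rw [he, hn0] at h1
      omega
    have hb := hiB u
    rw [Pi.sub_apply, Pi.sub_apply, hc₀app u, hc₀app v, if_pos ⟨hu, h1⟩,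
      if_neg (fun hcv => hcv.1 rfl), hcu] at hb
    omega
  -- by connectivity every vertex attains the maximum
  have hMw : ∀ w, c w = c v := by
    intro w
    have hcw := hconn v w
    induction hcw with
    | refl => rfl
    | tail hab hbc ih =>
        obtain ⟨d, hdt, hdh⟩ := hbc
        by_contra hne
        have hsw := hiiA d (by rw [hdt]; exact ih) (by rw [hdh]; exact hne)
        obtain ⟨i, hi1, hi2, -⟩ := hsw
        have hz : n (G.tail d) = 0 := key0 _ (by rw [hdt]; exact ih)
        omega
  -- hence the two rotor configurations coincide
  have hσeq : σ = σ' := by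
    funext u
    by_cases hu : u = v
    · have e1 : AAtot G v d₀ ρ v = d₀ := dif_pos rfl
      have e2 : AAtot G v d₀ ρ' v = d₀ := dif_pos rfl
      rw [hσdef, hσ'def, hu, e1, e2]
    · have hz : n u = 0 := key0 u (hMw u)
      have hsp := hnspec u hu
      rw [hz] at hsp
      exact hsp
  rw [AA_tree_eq G v T hT d₀ ρ hρ, AA_tree_eq G v T' hT' d₀ ρ' hρ',
    ← hσdef, ← hσ'def, hσeq]

end AngleAux

/-- For a planar ribbon graph `G` and spanning trees `T`, `T'`
rooted at a common vertex `v`, the angle `∠_v(T, T')` vanishes iff `T = T'`. -/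
theorem angle_eq_zero_iff_eq (G : RibbonGraph)
    (hconn : G.Connected) (hloop : G.Loopless) (hplanar : G.IsPlanar)
    (v : G.V) (T T' : Finset G.D)
    (hT : G.IsSpanningTree T) (hT' : G.IsSpanningTree T') :
    G.treeAngle v T T' = 0 ↔ T = T' := by
  constructor
  · intro hzero
    obtain ⟨ρ, hρ⟩ := AA_exists_toward G v T hT
    obtain ⟨ρ', hρ'⟩ := AA_exists_toward G v T' hT'
    have hex : ∃ p : G.RotorConfig v × G.RotorConfig v,
        G.TowardRoot v T p.1 ∧ G.TowardRoot v T' p.2 := ⟨(ρ, ρ'), hρ, hρ'⟩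
    rw [RibbonGraph.treeAngle, dif_pos hex] at hzero
    exact AA_forward G hconn hloop v T T' hT hT' hex.choose.1 hex.choose.2
      hex.choose_spec.1 hex.choose_spec.2 hzero
  · intro hTT
    subst hTT
    rw [RibbonGraph.treeAngle]
    split
    · rename_i hex
      apply Finset.sum_eq_zero
      intro u _
      by_cases hu : u = v
      · rw [dif_pos hu]
      · rw [dif_neg hu]
        have huniq := AA_unique G v T hT (hex.choose.1.1 u hu) hex.choose.1
          hex.choose.2 hex.choose_spec.1 hex.choose_spec.2 u hu
        rw [← huniq]
        have hex0 : ∃ k, (⇑G.next)^[k] (hex.choose.1.1 u hu)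
            = hex.choose.1.1 u hu := ⟨0, rfl⟩
        rw [RibbonGraph.dartAngle, dif_pos hex0]
        have h0 : Nat.find hex0 = 0 := Nat.le_zero.mp (Nat.find_min' hex0 rfl)
        rw [h0]
        exact Finset.sum_range_zero _
    · rfl
end

section
/- Let G be a planar ribbon graph such that G and its planar dual G* are both loopless, and let T and T' be spanning trees of G. Then φ(∠(T, T')) = ∠(T*, T'*) in Jac(G*), where T* = δ(T) and T'* = δ(T') are the dual spanning trees, ∠(T,T') denotes the angle between T and T' computed at any root vertex (which is well defined for planar ribbon graphs), and similarly for ∠(T*, T'*). -/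
attribute [local instance 10] Classical.propDecidable

/-! ### Auxiliary development for the proof -/

namespace Multigraph

variable {G : Multigraph}

lemma tail_rev (d : G.D) : G.tail (G.rev d) = G.head d := by
  show G.head (G.rev (G.rev d)) = G.head d
  rw [G.rev_invol]

lemma head_rev (d : G.D) : G.head (G.rev d) = G.tail d := rfl

lemma divClass_add (x y : G.Div0) : G.divClass (x + y) = G.divClass x + G.divClass y := rfl

lemma unitDiv_add_unitDiv (a b c : G.V) :
    G.unitDiv a b + G.unitDiv b c = G.unitDiv a c := by
  apply Subtype.ext
  funext x
  show G.unitDivFun a b x + G.unitDivFun b c x = G.unitDivFun a c x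
  simp only [unitDivFun]
  ring

lemma unitClass_trans (a b c : G.V) :
    G.unitClass a b + G.unitClass b c = G.unitClass a c := by
  rw [unitClass, unitClass, unitClass, ← divClass_add, unitDiv_add_unitDiv]

lemma unitClass_self (a : G.V) : G.unitClass a a = 0 := by
  have h : G.unitDiv a a = 0 := by
    apply Subtype.ext
    funext x
    show G.unitDivFun a a x = 0
    simp [unitDivFun]
  rw [unitClass, divClass, h]
  rfl

lemma unitClass_eq_sub (a b c : G.V) :
    G.unitClass a b = G.unitClass a c - G.unitClass b c := by
  rw [← unitClass_trans a b c]
  abel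

lemma unitClass_telescope (p : ℕ → G.V) (k : ℕ) :
    (∑ i ∈ Finset.range k, G.unitClass (p i) (p (i + 1))) = G.unitClass (p 0) (p k) := by
  induction k with
  | zero => simp [unitClass_self]
  | succ n ih => rw [Finset.sum_range_succ, ih, unitClass_trans]

lemma dartBoundary_def (d : G.D) :
    G.dartBoundary d = G.unitClass (G.head d) (G.tail d) := rfl

end Multigraph


namespace RibbonGraph

variable {G : RibbonGraph}

lemma revPerm_apply (d : G.D) : G.revPerm d = G.rev d := rfl

lemma facePerm_apply (d : G.D) : G.facePerm d = G.next (G.rev d) := by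
  show (G.next * G.revPerm) d = _
  rw [Equiv.Perm.mul_apply, revPerm_apply]

lemma rightFace_rev (d : G.D) : G.rightFace (G.rev d) = G.leftFace d := by
  show G.leftFace (G.rev (G.rev d)) = G.leftFace d
  rw [G.rev_invol]

lemma dual_head_apply (d : G.D) : G.dual.head d = G.leftFace d := rfl

lemma dual_tail_apply (d : G.D) : G.dual.tail d = G.rightFace d := rfl

lemma dual_rev_apply (d : G.D) : G.dual.rev d = G.rev d := rfl

lemma leftFace_next (d : G.D) : G.leftFace (G.next d) = G.rightFace d := by
  apply Quotient.sound
  refine ⟨-1, ?_⟩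
  show (G.facePerm ^ (-1 : ℤ)) (G.next d) = G.rev d
  rw [zpow_neg_one, Equiv.Perm.inv_def, Equiv.symm_apply_eq, facePerm_apply, G.rev_invol]

lemma dual_next_apply (d : G.D) : G.dual.next d = G.rev (G.next d) := by
  show (G.revPerm * G.facePerm * G.revPerm) d = _
  rw [Equiv.Perm.mul_apply, Equiv.Perm.mul_apply, revPerm_apply, revPerm_apply,
    facePerm_apply, G.rev_invol]

lemma head_dual_next (d : G.D) : G.head (G.dual.next d) = G.tail d := by
  rw [dual_next_apply]
  show G.head (G.rev (G.next d)) = G.tail d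
  have h : G.tail (G.next d) = G.tail d := G.next_tail d
  exact h

lemma tail_iterate_next (d : G.D) (k : ℕ) : G.tail ((⇑G.next)^[k] d) = G.tail d := by
  induction k with
  | zero => rfl
  | succ n ih => rw [Function.iterate_succ_apply', G.next_tail, ih]

lemma exists_iterate_next {d d' : G.D} (h : G.tail d = G.tail d') :
    ∃ k, (⇑G.next)^[k] d = d' := by
  obtain ⟨i, _, hpow⟩ := (G.next_cyclic d d' h).exists_pow_eq'
  exact ⟨i, by rw [Equiv.Perm.iterate_eq_pow]; exact hpow⟩

lemma dual_dartBoundary_def (d : G.D) :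
    G.dual.dartBoundary d = G.dual.unitClass (G.leftFace d) (G.rightFace d) := rfl

/-! ### Rotor walks toward the root -/

/-- The deterministic rotor walk step. -/
noncomputable def rotorStep {q : G.V} (ρ : G.RotorConfig q) (u : G.V) : G.V :=
  if h : u = q then q else G.head (ρ.1 u h)

lemma rotorStep_ne {q : G.V} (ρ : G.RotorConfig q) {u : G.V} (hu : u ≠ q) :
    rotorStep ρ u = G.head (ρ.1 u hu) := dif_neg hu

lemma rotor_reach_iterate {q : G.V} {T : Finset G.D} {ρ : G.RotorConfig q}
    (hρ : G.TowardRoot q T ρ) (u : G.V) :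
    ∃ k, (rotorStep ρ)^[k] u = q := by
  rcases eq_or_ne u q with rfl | hu
  · exact ⟨0, rfl⟩
  · have h := (hρ u hu).2
    clear hu
    induction h using Relation.ReflTransGen.head_induction_on with
    | refl => exact ⟨0, rfl⟩
    | head hab _ ih =>
      obtain ⟨k, hk⟩ := ih
      obtain ⟨ha, hhead⟩ := hab
      exact ⟨k + 1, by rw [Function.iterate_succ_apply, rotorStep_ne ρ ha, hhead, hk]⟩

/-- The number of rotor steps needed to reach the root. -/
noncomputable def rotorDepth {q : G.V} {T : Finset G.D} {ρ : G.RotorConfig q}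
    (hρ : G.TowardRoot q T ρ) (u : G.V) : ℕ :=
  Nat.find (rotor_reach_iterate hρ u)

lemma rotorDepth_spec {q : G.V} {T : Finset G.D} {ρ : G.RotorConfig q}
    (hρ : G.TowardRoot q T ρ) (u : G.V) :
    (rotorStep ρ)^[rotorDepth hρ u] u = q := Nat.find_spec (rotor_reach_iterate hρ u)

lemma rotorDepth_step {q : G.V} {T : Finset G.D} {ρ : G.RotorConfig q}
    (hρ : G.TowardRoot q T ρ) {u : G.V} (hu : u ≠ q) :
    rotorDepth hρ u = rotorDepth hρ (rotorStep ρ u) + 1 := by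
  have h1 : rotorDepth hρ u ≠ 0 := by
    intro h0
    have h := rotorDepth_spec hρ u
    rw [h0] at h
    exact hu h
  obtain ⟨m, hm⟩ := Nat.exists_eq_succ_of_ne_zero h1
  have hspec := rotorDepth_spec hρ u
  rw [hm, Function.iterate_succ_apply] at hspec
  have h2 : rotorDepth hρ (rotorStep ρ u) ≤ m := Nat.find_le hspec
  have h3 : rotorDepth hρ u ≤ rotorDepth hρ (rotorStep ρ u) + 1 := by
    apply Nat.find_le
    rw [Function.iterate_succ_apply]
    exact rotorDepth_spec hρ (rotorStep ρ u)
  omega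

lemma rotorDepth_lt_card {q : G.V} {T : Finset G.D} {ρ : G.RotorConfig q}
    (hρ : G.TowardRoot q T ρ) (u : G.V) :
    rotorDepth hρ u < Fintype.card G.V := by
  have hdef : rotorDepth hρ u = Nat.find (rotor_reach_iterate hρ u) := rfl
  have hinj : ∀ i ≤ rotorDepth hρ u, ∀ j ≤ rotorDepth hρ u,
      (rotorStep ρ)^[i] u = (rotorStep ρ)^[j] u → i = j := by
    intro i hi j hj hij
    by_contra hne
    wlog hlt : i < j generalizing i j
    · exact this j hj i hi hij.symm (Ne.symm hne) (by omega)
    have hq : (rotorStep ρ)^[rotorDepth hρ u - j] ((rotorStep ρ)^[j] u) = q := by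
      rw [← Function.iterate_add_apply]
      have e : rotorDepth hρ u - j + j = rotorDepth hρ u := by omega
      rw [e]
      exact rotorDepth_spec hρ u
    have hq2 : (rotorStep ρ)^[rotorDepth hρ u - j + i] u = q := by
      rw [Function.iterate_add_apply, hij]
      exact hq
    exact Nat.find_min (rotor_reach_iterate hρ u) (by omega) hq2
  have hcard : rotorDepth hρ u + 1 ≤ Fintype.card G.V := by
    have h := Finset.card_le_card_of_injOn (fun i => (rotorStep ρ)^[i] u)
      (fun i _ => Finset.mem_univ _) ?_ (s := Finset.range (rotorDepth hρ u + 1))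
    · simpa using h
    · intro i hi j hj hij
      simp only [Finset.coe_range, Set.mem_Iio] at hi hj
      exact hinj i (by omega) j (by omega) hij
  omega

lemma rotor_no_two_cycle {q : G.V} {T : Finset G.D} {ρ : G.RotorConfig q}
    (hρ : G.TowardRoot q T ρ) {u u' : G.V} (hu : u ≠ q) (hu' : u' ≠ q)
    (h1 : G.head (ρ.1 u hu) = u') (h2 : G.head (ρ.1 u' hu') = u) : False := by
  have e1 : rotorStep ρ u = u' := by rw [rotorStep_ne ρ hu, h1]
  have e2 : rotorStep ρ u' = u := by rw [rotorStep_ne ρ hu', h2]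
  have d1 := rotorDepth_step hρ hu
  have d2 := rotorDepth_step hρ hu'
  rw [e1] at d1
  rw [e2] at d2
  omega

/-! ### The set of rotor darts -/

/-- The set of darts used by a rotor configuration. -/
noncomputable def rotorSet {q : G.V} (ρ : G.RotorConfig q) : Finset G.D :=
  Finset.univ.image (fun u : {u : G.V // u ≠ q} => ρ.1 u.1 u.2)

lemma mem_rotorSet {q : G.V} {ρ : G.RotorConfig q} {d : G.D} :
    d ∈ rotorSet ρ ↔ ∃ (u : G.V) (hu : u ≠ q), ρ.1 u hu = d := by
  simp only [rotorSet, Finset.mem_image, Finset.mem_univ, true_and]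
  constructor
  · rintro ⟨⟨u, hu⟩, h⟩
    exact ⟨u, hu, h⟩
  · rintro ⟨u, hu, h⟩
    exact ⟨⟨u, hu⟩, h⟩

lemma rotorSet_subset {q : G.V} {T : Finset G.D} {ρ : G.RotorConfig q}
    (hρ : G.TowardRoot q T ρ) : rotorSet ρ ⊆ T := by
  intro d hd
  obtain ⟨u, hu, rfl⟩ := mem_rotorSet.1 hd
  exact (hρ u hu).1

lemma rotorSet_no_rev {q : G.V} {T : Finset G.D} {ρ : G.RotorConfig q}
    (hρ : G.TowardRoot q T ρ) {d : G.D} (hd : d ∈ rotorSet ρ) :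
    G.rev d ∉ rotorSet ρ := by
  obtain ⟨u, hu, rfl⟩ := mem_rotorSet.1 hd
  intro hrev
  obtain ⟨u', hu', h'⟩ := mem_rotorSet.1 hrev
  have e1 : G.head (ρ.1 u hu) = u' := by
    have ht := ρ.2 u' hu'
    rw [h'] at ht
    rw [Multigraph.tail_rev] at ht
    exact ht
  have e2 : G.head (ρ.1 u' hu') = u := by
    rw [h', Multigraph.head_rev]
    exact ρ.2 u hu
  exact rotor_no_two_cycle hρ hu hu' e1 e2

lemma rotorSet_card {q : G.V} (ρ : G.RotorConfig q) :
    (rotorSet ρ).card = Fintype.card G.V - 1 := by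
  rw [rotorSet, Finset.card_image_of_injective _ ?_, Finset.card_univ]
  · rw [show (Fintype.card {u : G.V // u ≠ q}) = Fintype.card {u : G.V // ¬ u = q} from rfl,
      Fintype.card_subtype_compl, Fintype.card_subtype_eq]
  · intro a b h
    have h' : ρ.1 a.1 a.2 = ρ.1 b.1 b.2 := h
    apply Subtype.ext
    rw [← ρ.2 a.1 a.2, ← ρ.2 b.1 b.2, h']

lemma rotorSet_union_rev {q : G.V} {T : Finset G.D} {ρ : G.RotorConfig q}
    (hρ : G.TowardRoot q T ρ) (hrev : ∀ d ∈ T, G.rev d ∈ T)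
    (hcard : T.card = 2 * (Fintype.card G.V - 1)) :
    rotorSet ρ ∪ (rotorSet ρ).image G.rev = T := by
  have hdisj : Disjoint (rotorSet ρ) ((rotorSet ρ).image G.rev) := by
    rw [Finset.disjoint_left]
    intro d hd hd'
    obtain ⟨r, hr, hrd⟩ := Finset.mem_image.1 hd'
    have : G.rev d ∈ rotorSet ρ := by
      rw [← hrd, G.rev_invol]
      exact hr
    exact rotorSet_no_rev hρ hd this
  apply Finset.eq_of_subset_of_card_le
  · intro d hd
    rcases Finset.mem_union.1 hd with h | h
    · exact rotorSet_subset hρ h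
    · obtain ⟨r, hr, hrd⟩ := Finset.mem_image.1 h
      rw [← hrd]
      exact hrev _ (rotorSet_subset hρ hr)
  · rw [Finset.card_union_of_disjoint hdisj,
      Finset.card_image_of_injective _ G.rev_invol.injective, rotorSet_card, hcard]
    omega

lemma mem_rotorSet_iff_rev {q : G.V} {T : Finset G.D} {ρ : G.RotorConfig q}
    (hρ : G.TowardRoot q T ρ) (hrev : ∀ d ∈ T, G.rev d ∈ T)
    (hcard : T.card = 2 * (Fintype.card G.V - 1)) {d : G.D} (hd : d ∈ T) :
    d ∈ rotorSet ρ ↔ G.rev d ∉ rotorSet ρ := by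
  constructor
  · exact fun h => rotorSet_no_rev hρ h
  · intro h
    rw [← rotorSet_union_rev hρ hrev hcard] at hd
    rcases Finset.mem_union.1 hd with h1 | h1
    · exact h1
    · exfalso
      obtain ⟨r, hr, hrd⟩ := Finset.mem_image.1 h1
      apply h
      rw [← hrd, G.rev_invol]
      exact hr

/-! ### Existence of rotor configurations oriented toward the root -/

lemma exists_towardRoot {T : Finset G.D} {q : G.V}
    (hreach : ∀ u, Relation.ReflTransGen (G.treeAdj T) u q) :
    ∃ ρ : G.RotorConfig q, G.TowardRoot q T ρ := by
  classical
  let Rn : ℕ → G.V → Prop := fun n =>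
    Nat.rec (fun u => u = q) (fun _ ih u => u = q ∨ ∃ b, G.treeAdj T u b ∧ ih b) n
  have hRn_succ : ∀ (n : ℕ) (u : G.V),
      Rn (n + 1) u ↔ (u = q ∨ ∃ b, G.treeAdj T u b ∧ Rn n b) := fun _ _ => Iff.rfl
  have hex : ∀ u, ∃ n, Rn n u := by
    intro u
    induction hreach u using Relation.ReflTransGen.head_induction_on with
    | refl => exact ⟨0, rfl⟩
    | head hab _ ih =>
      obtain ⟨n, hn⟩ := ih
      exact ⟨n + 1, Or.inr ⟨_, hab, hn⟩⟩
  let dist : G.V → ℕ := fun u => sInf {n | Rn n u}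
  have hdspec : ∀ u, Rn (dist u) u := fun u => Nat.sInf_mem (hex u)
  have hdle : ∀ u n, Rn n u → dist u ≤ n := fun u n hn => Nat.sInf_le hn
  have hkey : ∀ u, u ≠ q → ∃ d, d ∈ T ∧ G.tail d = u ∧
      dist (G.head d) < dist u := by
    intro u hu
    have hspec : Rn (dist u) u := hdspec u
    rcases hdist0 : dist u with _ | n
    · rw [hdist0] at hspec
      exact absurd hspec hu
    · rw [hdist0] at hspec
      rcases (hRn_succ n u).1 hspec with h | ⟨b, ⟨d, hdT, hdt, hdh⟩, hb⟩
      · exact absurd h hu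
      · refine ⟨d, hdT, hdt, ?_⟩
        have hble : dist b ≤ n := hdle b n hb
        rw [hdh]
        omega
  let f : (u : G.V) → u ≠ q → G.D := fun u hu => (hkey u hu).choose
  have hfT : ∀ u hu, f u hu ∈ T := fun u hu => (hkey u hu).choose_spec.1
  have hft : ∀ u hu, G.tail (f u hu) = u := fun u hu => (hkey u hu).choose_spec.2.1
  have hflt : ∀ u hu, dist (G.head (f u hu)) < dist u :=
    fun u hu => (hkey u hu).choose_spec.2.2
  refine ⟨⟨f, hft⟩, ?_⟩
  intro u hu
  refine ⟨hfT u hu, ?_⟩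
  have main : ∀ (n : ℕ) (u : G.V) (hu : u ≠ q), dist u = n →
      Relation.ReflTransGen (fun a b => ∃ ha : a ≠ q, G.head (f a ha) = b) u q := by
    intro n
    induction n using Nat.strong_induction_on with
    | _ n ih =>
      intro u hu hdist
      rcases eq_or_ne (G.head (f u hu)) q with hbq | hbq
      · exact Relation.ReflTransGen.single ⟨hu, hbq⟩
      · refine Relation.ReflTransGen.head ⟨hu, rfl⟩ ?_
        exact ih (dist (G.head (f u hu))) (hdist ▸ hflt u hu) _ hbq rfl
  exact main (dist u) u hu rfl

end RibbonGraph


/-! ### Generic sum lemmas -/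

lemma sum_dite_ne {V M : Type} [Fintype V] [DecidableEq V] [AddCommMonoid M] (v : V)
    (f : (u : V) → u ≠ v → M) :
    (∑ u : V, if hu : u = v then 0 else f u hu) = ∑ u : {u : V // u ≠ v}, f u.1 u.2 := by
  classical
  let g : V → M := fun u => if hu : u = v then 0 else f u hu
  have h1 : ∀ u : {u : V // u ≠ v}, f u.1 u.2 = g u.1 := by
    intro u
    simp only [g, dif_neg u.2]
  rw [Finset.sum_congr rfl (fun u _ => h1 u)]
  rw [← Finset.sum_subtype (Finset.univ.filter (fun u => u ≠ v))
    (fun u => by simp) g]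
  rw [← Finset.sum_filter_add_sum_filter_not Finset.univ (fun u => u ≠ v) g]
  have h2 : ∀ u ∈ Finset.univ.filter (fun u : V => ¬ u ≠ v), g u = 0 := by
    intro u hu
    have : u = v := by simpa using (Finset.mem_filter.1 hu).2
    simp [g, this]
  rw [Finset.sum_congr rfl h2]
  simp

lemma sum_transversal {α M : Type} [DecidableEq α] [AddCommGroup M] (rev : α → α)
    (hinv : Function.Involutive rev) (μ : α → M) (hμ : ∀ d, μ (rev d) = μ d)
    {O O' : Finset α} (hO : ∀ d, d ∈ O ↔ rev d ∉ O) (hO' : ∀ d, d ∈ O' ↔ rev d ∉ O') :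
    ∑ d ∈ O, μ d = ∑ d ∈ O', μ d := by
  apply Finset.sum_nbij' (i := fun d => if d ∈ O' then d else rev d)
    (j := fun d => if d ∈ O then d else rev d)
  · intro a ha
    by_cases h : a ∈ O'
    · simpa [h]
    · simp only [if_neg h]
      exact (hO' (rev a)).2 (by rw [hinv a]; exact h)
  · intro a ha
    by_cases h : a ∈ O
    · simpa [h]
    · simp only [if_neg h]
      exact (hO (rev a)).2 (by rw [hinv a]; exact h)
  · intro a ha
    by_cases h : a ∈ O'
    · simp [h, ha]
    · simp only [if_neg h]
      have hra : rev a ∉ O := (hO a).1 ha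
      rw [if_neg hra, hinv a]
  · intro a ha
    by_cases h : a ∈ O
    · simp [h, ha]
    · simp only [if_neg h]
      have hra : rev a ∉ O' := (hO' a).1 ha
      rw [if_neg hra, hinv a]
  · intro a ha
    by_cases h : a ∈ O'
    · simp [h]
    · simp only [if_neg h]
      exact (hμ a).symm

lemma even_card_closed_rev {α : Type} [DecidableEq α] (rev : α → α)
    (hinv : Function.Involutive rev) (hne : ∀ d, rev d ≠ d)
    (s : Finset α) (hs : ∀ d ∈ s, rev d ∈ s) : Even s.card := by
  have main : ∀ (n : ℕ) (s : Finset α), (∀ d ∈ s, rev d ∈ s) → s.card = n → Even n := by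
    intro n
    induction n using Nat.strong_induction_on with
    | _ n ih =>
      intro s hs hcard
      rcases Finset.eq_empty_or_nonempty s with rfl | ⟨d, hd⟩
      · simp only [Finset.card_empty] at hcard
        exact hcard ▸ Even.zero
      · have hrd : rev d ∈ s := hs d hd
        have hne' : rev d ≠ d := hne d
        have hclosed : ∀ x ∈ (s.erase d).erase (rev d), rev x ∈ (s.erase d).erase (rev d) := by
          intro x hx
          have hxs : x ∈ s := Finset.mem_of_mem_erase (Finset.mem_of_mem_erase hx)
          have hx1 : x ≠ rev d := Finset.ne_of_mem_erase hx
          have hx2 : x ≠ d := Finset.ne_of_mem_erase (Finset.mem_of_mem_erase hx)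
          refine Finset.mem_erase.2 ⟨?_, Finset.mem_erase.2 ⟨?_, hs x hxs⟩⟩
          · intro h
            exact hx2 (by rw [← hinv x, h, hinv])
          · intro h
            exact hx1 (by rw [← hinv x, h])
        have hmem : rev d ∈ s.erase d := Finset.mem_erase.2 ⟨hne', hrd⟩
        have hcard' : ((s.erase d).erase (rev d)).card = n - 2 := by
          rw [Finset.card_erase_of_mem hmem, Finset.card_erase_of_mem hd, hcard]
          omega
        have h2 : 2 ≤ n := by
          have hsub : ({d, rev d} : Finset α) ⊆ s := by
            intro x hx
            rcases Finset.mem_insert.1 hx with rfl | hx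
            · exact hd
            · rw [Finset.mem_singleton.1 hx]
              exact hrd
          have : ({d, rev d} : Finset α).card = 2 := by
            rw [Finset.card_insert_of_notMem (by simp [Ne.symm hne']), Finset.card_singleton]
          calc 2 = ({d, rev d} : Finset α).card := this.symm
          _ ≤ s.card := Finset.card_le_card hsub
          _ = n := hcard
        obtain ⟨r, hr⟩ := ih (n - 2) (by omega) _ hclosed hcard'
        exact ⟨r + 1, by omega⟩
  exact main s.card s hs rfl

namespace RibbonGraph

variable {G : RibbonGraph}

/-! ### Evaluation of dart angles -/

set_option maxHeartbeats 1000000 in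
lemma phi_dartAngle (φ : G.Jac ≃+ G.dual.Jac)
    (hφ : ∀ d : G.D, φ (G.dartBoundary d) = G.dual.dartBoundary d)
    {d d' : G.D} (h : G.tail d = G.tail d') :
    φ (G.dartAngle d d') = G.dual.unitClass (G.rightFace d) (G.rightFace d') := by
  have hex := exists_iterate_next h
  simp only [dartAngle, dif_pos hex]
  rw [map_sum]
  have key : ∀ i : ℕ, φ (G.dartBoundary ((⇑G.next)^[i + 1] d)) =
      G.dual.unitClass (G.rightFace ((⇑G.next)^[i] d)) (G.rightFace ((⇑G.next)^[i + 1] d)) := by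
    intro i
    rw [hφ, dual_dartBoundary_def]
    congr 1
    rw [Function.iterate_succ_apply', leftFace_next]
  rw [Finset.sum_congr rfl (fun i _ => key i)]
  calc (∑ i ∈ Finset.range (Nat.find hex),
        G.dual.unitClass (G.rightFace ((⇑G.next)^[i] d)) (G.rightFace ((⇑G.next)^[i + 1] d)))
      = G.dual.unitClass (G.rightFace ((⇑G.next)^[0] d))
          (G.rightFace ((⇑G.next)^[Nat.find hex] d)) :=
        Multigraph.unitClass_telescope (G := G.dual.toMultigraph)
          (fun i => G.rightFace ((⇑G.next)^[i] d)) (Nat.find hex)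
    _ = G.dual.unitClass (G.rightFace d) (G.rightFace d') := by rw [Nat.find_spec hex]; rfl

set_option maxHeartbeats 1000000 in
lemma dual_dartAngle_eq (φ : G.Jac ≃+ G.dual.Jac)
    (hφ : ∀ d : G.D, φ (G.dartBoundary d) = G.dual.dartBoundary d)
    {c c' : G.D} (h : G.dual.tail c = G.dual.tail c') :
    G.dual.dartAngle c c' = φ (G.unitClass (G.tail c) (G.tail c')) := by
  have hex := exists_iterate_next (G := G.dual) h
  simp only [dartAngle, dif_pos hex]
  have key : ∀ i : ℕ, G.dual.dartBoundary ((⇑G.dual.next)^[i + 1] c) =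
      φ (G.unitClass (G.tail ((⇑G.dual.next)^[i] c)) (G.tail ((⇑G.dual.next)^[i + 1] c))) := by
    intro i
    refine Eq.trans (hφ _).symm ?_
    congr 1
    exact congrArg (fun a => G.unitClass a (G.tail ((⇑G.dual.next)^[i + 1] c)))
      ((congrArg G.head (Function.iterate_succ_apply' (⇑G.dual.next) i c)).trans (head_dual_next _))
  rw [Finset.sum_congr rfl (fun i _ => key i), ← map_sum]
  congr 1
  rw [show @Nat.find (fun n => (⇑G.dual.next)^[n] c = c')
      (fun a => G.dual.dD ((⇑G.dual.next)^[a] c) c') hex = Nat.find hex from by congr]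
  calc (∑ i ∈ Finset.range (Nat.find hex),
        G.unitClass (G.tail ((⇑G.dual.next)^[i] c)) (G.tail ((⇑G.dual.next)^[i + 1] c)))
      = G.unitClass (G.tail ((⇑G.dual.next)^[0] c))
          (G.tail ((⇑G.dual.next)^[Nat.find hex] c)) :=
        Multigraph.unitClass_telescope (G := G.toMultigraph)
          (fun i => G.tail ((⇑G.dual.next)^[i] c)) (Nat.find hex)
    _ = G.unitClass (G.tail c) (G.tail c') := by rw [Nat.find_spec hex]; rfl

/-! ### Evaluation of tree angles -/

lemma phi_treeAngle (φ : G.Jac ≃+ G.dual.Jac)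
    (hφ : ∀ d : G.D, φ (G.dartBoundary d) = G.dual.dartBoundary d)
    {v : G.V} {T T' : Finset G.D}
    (h : ∃ p : G.RotorConfig v × G.RotorConfig v,
      G.TowardRoot v T p.1 ∧ G.TowardRoot v T' p.2) :
    φ (G.treeAngle v T T') = ∑ u : {u : G.V // u ≠ v},
      G.dual.unitClass (G.rightFace (h.choose.1.1 u.1 u.2))
        (G.rightFace (h.choose.2.1 u.1 u.2)) := by
  simp only [treeAngle, dif_pos h]
  rw [map_sum]
  have key : ∀ u : G.V,
      φ (if hu : u = v then 0 else G.dartAngle (h.choose.1.1 u hu) (h.choose.2.1 u hu)) =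
      if hu : u = v then 0 else
        G.dual.unitClass (G.rightFace (h.choose.1.1 u hu)) (G.rightFace (h.choose.2.1 u hu)) := by
    intro u
    by_cases hu : u = v
    · rw [dif_pos hu, dif_pos hu, map_zero]
    · rw [dif_neg hu, dif_neg hu]
      exact phi_dartAngle φ hφ (by rw [h.choose.1.2 u hu, h.choose.2.2 u hu])
  rw [Finset.sum_congr rfl (fun u _ => key u), sum_dite_ne]

lemma dual_treeAngle_eq (φ : G.Jac ≃+ G.dual.Jac)
    (hφ : ∀ d : G.D, φ (G.dartBoundary d) = G.dual.dartBoundary d)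
    {w : G.dual.V} {S S' : Finset G.D}
    (h : ∃ p : G.dual.RotorConfig w × G.dual.RotorConfig w,
      G.dual.TowardRoot w S p.1 ∧ G.dual.TowardRoot w S' p.2) :
    G.dual.treeAngle w S S' = φ (∑ f : {f : G.dual.V // f ≠ w},
      G.unitClass (G.tail (h.choose.1.1 f.1 f.2)) (G.tail (h.choose.2.1 f.1 f.2))) := by
  simp only [treeAngle, dif_pos h]
  have key : ∀ f : G.dual.V,
      (if hf : f = w then 0 else G.dual.dartAngle (h.choose.1.1 f hf) (h.choose.2.1 f hf)) =
      if hf : f = w then 0 else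
        φ (G.unitClass (G.tail (h.choose.1.1 f hf)) (G.tail (h.choose.2.1 f hf))) := by
    intro f
    by_cases hf : f = w
    · rw [dif_pos hf, dif_pos hf]
    · rw [dif_neg hf, dif_neg hf]
      exact dual_dartAngle_eq φ hφ (by rw [h.choose.1.2 f hf, h.choose.2.2 f hf])
  rw [Finset.sum_congr rfl (fun f _ => key f), sum_dite_ne, ← map_sum]

end RibbonGraph


lemma exists_exit {α : Type} {r : α → α → Prop} {P : α → Prop} {a b : α}
    (h : Relation.ReflTransGen r a b) (ha : P a) (hb : ¬P b) :
    ∃ x y, r x y ∧ P x ∧ ¬P y := by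
  revert hb
  induction h with
  | refl => intro hb; exact absurd ha hb
  | @tail m c h1 hstep ih =>
    intro hb
    by_cases hP : P m
    · exact ⟨m, c, hstep, hP, hb⟩
    · exact ih hP

namespace RibbonGraph

variable {G : RibbonGraph}

lemma rightFace_def (d : G.D) : G.rightFace d = G.leftFace (G.rev d) := rfl

lemma dual_adj (d : G.D) : G.dual.Adj (G.rightFace d) (G.leftFace d) :=
  ⟨d, rfl, rfl⟩

lemma dual_adj' (d : G.D) : G.dual.Adj (G.leftFace d) (G.rightFace d) := by
  have h := dual_adj (G.rev d)
  rwa [rightFace_rev, ← rightFace_def] at h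

lemma reach_leftFace_of_tail_eq {x y : G.D} (h : G.tail x = G.tail y) :
    Relation.ReflTransGen G.dual.Adj (G.leftFace x) (G.leftFace y) := by
  obtain ⟨k, hk⟩ := exists_iterate_next h
  subst hk
  clear h
  induction k with
  | zero => exact Relation.ReflTransGen.refl
  | succ n ih =>
    rw [Function.iterate_succ_apply', leftFace_next]
    exact ih.tail (dual_adj' _)

lemma reach_leftFace_of_vertex_reach {a b : G.V} (h : Relation.ReflTransGen G.Adj a b) :
    ∀ x y : G.D, G.tail x = a → G.tail y = b →
      Relation.ReflTransGen G.dual.Adj (G.leftFace x) (G.leftFace y) := by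
  induction h using Relation.ReflTransGen.head_induction_on with
  | refl =>
    intro x y hx hy
    exact reach_leftFace_of_tail_eq (by rw [hx, hy])
  | head hab hrest ih =>
    intro x y hx hy
    obtain ⟨d, hdt, hdh⟩ := hab
    have h1 := reach_leftFace_of_tail_eq (x := x) (y := d) (by rw [hx, hdt])
    have h2 : G.dual.Adj (G.leftFace d) (G.leftFace (G.rev d)) := by
      have h := dual_adj' d
      rwa [rightFace_def] at h
    have h3 := ih (G.rev d) y (by rw [Multigraph.tail_rev, hdh]) hy
    exact (h1.tail h2).trans h3

lemma dual_connected (hconn : G.Connected) : G.dual.Connected := by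
  intro f g
  exact Quotient.inductionOn₂ f g
    (fun x y => reach_leftFace_of_vertex_reach (hconn (G.tail x) (G.tail y)) x y rfl rfl)

lemma card_faces_eq (G : RibbonGraph) : Fintype.card G.dual.V = Fintype.card G.Faces := rfl

lemma card_compl_tree (hplanar : G.IsPlanar) {T : Finset G.D}
    (hcard : T.card = 2 * (Fintype.card G.V - 1)) (v : G.V) (w : G.Faces) :
    Tᶜ.card = 2 * (Fintype.card G.dual.V - 1) := by
  have heven : Even (Finset.univ : Finset G.D).card :=
    even_card_closed_rev G.rev G.rev_invol G.rev_ne _ (fun d _ => Finset.mem_univ _)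
  rw [Finset.card_univ] at heven
  obtain ⟨m, hm⟩ := heven
  have hcompl : Tᶜ.card = Fintype.card G.D - T.card := Finset.card_compl T
  have hle : T.card ≤ Fintype.card G.D := Finset.card_le_univ T
  have hV1 : 1 ≤ Fintype.card G.V := Fintype.card_pos_iff.2 ⟨v⟩
  have hF1 : 1 ≤ Fintype.card G.Faces := Fintype.card_pos_iff.2 ⟨w⟩
  have hpl : Fintype.card G.V + Fintype.card G.Faces = Fintype.card G.D / 2 + 2 := hplanar
  rw [card_faces_eq]
  omega

/-- Every face can reach the root face through the complement of a spanning tree: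
planar duality of spanning trees, proved via the rotor-walk argument. -/
lemma dual_tree_reach (hconn : G.Connected) {T : Finset G.D} (hT : G.IsSpanningTree T)
    (v : G.V) (w f : G.dual.V) :
    Relation.ReflTransGen (G.dual.treeAdj Tᶜ) f w := by
  by_contra hf0
  set P : G.Faces → Prop := fun g => Relation.ReflTransGen (G.dual.treeAdj Tᶜ) g w with hP
  have hwP : P w := Relation.ReflTransGen.refl
  have hCT : ∀ d : G.D, ¬ P (G.rightFace d) → P (G.leftFace d) → d ∈ T := by
    intro d h1 h2
    by_contra hdT
    exact h1 (Relation.ReflTransGen.head ⟨d, Finset.mem_compl.2 hdT, rfl, rfl⟩ h2)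
  have hCne : ∃ d : G.D, ¬ P (G.rightFace d) ∧ P (G.leftFace d) := by
    obtain ⟨x, y, hxy, hx, hy⟩ := exists_exit (P := fun g : G.Faces => ¬ P g)
      (dual_connected hconn f w) hf0 (fun h => h hwP)
    obtain ⟨d, hdt, hdh⟩ := hxy
    change G.rightFace d = x at hdt
    change G.leftFace d = y at hdh
    exact ⟨d, by rw [hdt]; exact hx, by rw [hdh]; exact not_not.1 hy⟩
  have hsucc : ∀ d : G.D, ¬ P (G.rightFace d) → P (G.leftFace d) →
      ∃ d' : G.D, (¬ P (G.rightFace d') ∧ P (G.leftFace d')) ∧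
        G.tail d' = G.head d ∧ d' ≠ G.rev d := by
    intro d hd1 hd2
    have hmpos : 0 < Function.minimalPeriod (⇑G.next) (G.rev d) := by
      apply Function.IsPeriodicPt.minimalPeriod_pos (orderOf_pos G.next)
      show (⇑G.next)^[orderOf G.next] (G.rev d) = G.rev d
      rw [Equiv.Perm.iterate_eq_pow, pow_orderOf_eq_one]
      rfl
    set m := Function.minimalPeriod (⇑G.next) (G.rev d) with hm
    set Q : ℕ → Prop := fun j => P (G.leftFace ((⇑G.next)^[j] (G.rev d))) with hQ
    haveI : DecidablePred Q := fun _ => Classical.propDecidable _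
    have hQ1 : Q 1 := by
      show P (G.leftFace ((⇑G.next)^[1] (G.rev d)))
      have e : G.leftFace ((⇑G.next)^[1] (G.rev d)) = G.leftFace d := by
        show G.leftFace (G.next (G.rev d)) = G.leftFace d
        rw [leftFace_next, rightFace_rev]
      rw [e]
      exact hd2
    have hQm : ¬ Q m := by
      show ¬ P (G.leftFace ((⇑G.next)^[m] (G.rev d)))
      rw [hm, Function.iterate_minimalPeriod]
      exact fun h => hd1 (by rwa [← rightFace_def] at h)
    have h1m : 1 ≤ m := hmpos
    have hQi : Q (Nat.findGreatest Q m) := Nat.findGreatest_spec h1m hQ1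
    have hile : Nat.findGreatest Q m ≤ m := Nat.findGreatest_le m
    have hilt : Nat.findGreatest Q m < m := lt_of_le_of_ne hile (fun h => hQm (h ▸ hQi))
    have h1i : 1 ≤ Nat.findGreatest Q m := Nat.le_findGreatest h1m hQ1
    have hQi1 : ¬ Q (Nat.findGreatest Q m + 1) :=
      Nat.findGreatest_is_greatest (k := Nat.findGreatest Q m + 1) (n := m)
        (by omega) (by omega)
    refine ⟨(⇑G.next)^[Nat.findGreatest Q m] (G.rev d), ⟨?_, ?_⟩, ?_, ?_⟩
    · intro hcon
      apply hQi1
      show P (G.leftFace ((⇑G.next)^[Nat.findGreatest Q m + 1] (G.rev d)))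
      rw [Function.iterate_succ_apply', leftFace_next]
      exact hcon
    · exact hQi
    · rw [tail_iterate_next, Multigraph.tail_rev]
    · intro heq
      have hper : Function.IsPeriodicPt (⇑G.next) (Nat.findGreatest Q m) (G.rev d) := heq
      have hge := Function.IsPeriodicPt.minimalPeriod_le (by omega) hper
      rw [← hm] at hge
      omega
  obtain ⟨ρ, hρ⟩ := exists_towardRoot (T := T) (q := v) (fun u => hT.2.1 u v)
  have hunion := rotorSet_union_rev hρ hT.1 hT.2.2
  obtain ⟨d0, hd0⟩ := hCne
  let e : ℕ → {d : G.D // ¬ P (G.rightFace d) ∧ P (G.leftFace d)} := fun k =>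
    Nat.rec ⟨d0, hd0⟩ (fun _ p =>
      ⟨(hsucc p.1 p.2.1 p.2.2).choose, (hsucc p.1 p.2.1 p.2.2).choose_spec.1⟩) k
  have he_tail : ∀ k, G.tail (e (k + 1)).1 = G.head (e k).1 :=
    fun k => (hsucc (e k).1 (e k).2.1 (e k).2.2).choose_spec.2.1
  have he_ne : ∀ k, (e (k + 1)).1 ≠ G.rev (e k).1 :=
    fun k => (hsucc (e k).1 (e k).2.1 (e k).2.2).choose_spec.2.2
  have heT : ∀ k, (e k).1 ∈ T := fun k => hCT (e k).1 (e k).2.1 (e k).2.2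
  have hup_or : ∀ g ∈ T, g ∈ rotorSet ρ ∨ G.rev g ∈ rotorSet ρ := by
    intro g hg
    rw [← hunion] at hg
    rcases Finset.mem_union.1 hg with h | h
    · exact Or.inl h
    · right
      obtain ⟨r, hr, hrg⟩ := Finset.mem_image.1 h
      rw [← hrg, G.rev_invol]
      exact hr
  have step_up : ∀ g ∈ rotorSet ρ,
      rotorDepth hρ (G.tail g) = rotorDepth hρ (G.head g) + 1 := by
    intro g hg
    obtain ⟨u, hu, rfl⟩ := mem_rotorSet.1 hg
    rw [ρ.2 u hu, rotorDepth_step hρ hu, rotorStep_ne ρ hu]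
  have step_down : ∀ g : G.D, G.rev g ∈ rotorSet ρ →
      rotorDepth hρ (G.head g) = rotorDepth hρ (G.tail g) + 1 := by
    intro g hg
    have h := step_up _ hg
    rwa [Multigraph.tail_rev, Multigraph.head_rev] at h
  have down_persist : ∀ k, G.rev (e k).1 ∈ rotorSet ρ → G.rev (e (k + 1)).1 ∈ rotorSet ρ := by
    intro k hdown
    rcases hup_or _ (heT (k + 1)) with hup | hdn
    · exfalso
      obtain ⟨u1, hu1, he1⟩ := mem_rotorSet.1 hup
      obtain ⟨u2, hu2, he2⟩ := mem_rotorSet.1 hdown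
      have hu12 : u1 = u2 := by
        rw [← ρ.2 u1 hu1, ← ρ.2 u2 hu2, he1, he2, Multigraph.tail_rev, he_tail k]
      subst hu12
      apply he_ne k
      rw [← he1, ← he2]
    · exact hdn
  by_cases hdc : ∃ k, G.rev (e k).1 ∈ rotorSet ρ
  · obtain ⟨k0, hk0⟩ := hdc
    have hall : ∀ j, G.rev (e (k0 + j)).1 ∈ rotorSet ρ := by
      intro j
      induction j with
      | zero => exact hk0
      | succ n ih => exact down_persist _ ih
    have hmono : ∀ j, rotorDepth hρ (G.tail (e (k0 + j)).1)
        = rotorDepth hρ (G.tail (e k0).1) + j := by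
      intro j
      induction j with
      | zero => rfl
      | succ n ih =>
        have hs := step_down _ (hall n)
        have ht := he_tail (k0 + n)
        rw [show k0 + (n + 1) = (k0 + n) + 1 from rfl, ht, hs]
        omega
    have hcontra := hmono (Fintype.card G.V)
    have hb := rotorDepth_lt_card hρ (G.tail (e (k0 + Fintype.card G.V)).1)
    omega
  · push_neg at hdc
    have hallup : ∀ k, (e k).1 ∈ rotorSet ρ := by
      intro k
      rcases hup_or _ (heT k) with h | h
      · exact h
      · exact absurd h (hdc k)
    have hmono : ∀ k, rotorDepth hρ (G.tail (e k).1) + k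
        = rotorDepth hρ (G.tail (e 0).1) := by
      intro k
      induction k with
      | zero => rfl
      | succ n ih =>
        have hs := step_up _ (hallup n)
        have ht := he_tail n
        rw [ht]
        omega
    have hcontra := hmono (rotorDepth hρ (G.tail (e 0).1) + 1)
    omega

end RibbonGraph

set_option maxHeartbeats 4000000

/-- For a planar ribbon graph `G` with `G`, `G*` loopless and
spanning trees `T`, `T'` of `G`, `φ(∠(T,T')) = ∠(T*, T'*)`, the angles being
computed at arbitrary root vertices (they are root-independent in the planar
case). -/
theorem dual_of_tree_angle (G : RibbonGraph)
    (hconn : G.Connected) (hloop : G.Loopless) (hplanar : G.IsPlanar)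
    (hdualloop : G.dual.Loopless)
    (φ : G.Jac ≃+ G.dual.Jac)
    (hφ : ∀ d : G.D, φ (G.dartBoundary d) = G.dual.dartBoundary d)
    (T T' : Finset G.D) (hT : G.IsSpanningTree T) (hT' : G.IsSpanningTree T')
    (v : G.V) (w : G.dual.V) :
    φ (G.treeAngle v T T') = G.dual.treeAngle w Tᶜ T'ᶜ := by
  classical
  obtain ⟨ρ1, hρ1⟩ := RibbonGraph.exists_towardRoot (T := T) (q := v) (fun u => hT.2.1 u v)
  obtain ⟨ρ2, hρ2⟩ := RibbonGraph.exists_towardRoot (T := T') (q := v) (fun u => hT'.2.1 u v)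
  have h1 : ∃ p : G.RotorConfig v × G.RotorConfig v,
      G.TowardRoot v T p.1 ∧ G.TowardRoot v T' p.2 := ⟨(ρ1, ρ2), hρ1, hρ2⟩
  obtain ⟨σ1, hσ1⟩ := RibbonGraph.exists_towardRoot (G := G.dual) (T := Tᶜ) (q := w)
    (fun g => RibbonGraph.dual_tree_reach hconn hT v w g)
  obtain ⟨σ2, hσ2⟩ := RibbonGraph.exists_towardRoot (G := G.dual) (T := T'ᶜ) (q := w)
    (fun g => RibbonGraph.dual_tree_reach hconn hT' v w g)
  have h2 : ∃ p : G.dual.RotorConfig w × G.dual.RotorConfig w,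
      G.dual.TowardRoot w Tᶜ p.1 ∧ G.dual.TowardRoot w T'ᶜ p.2 := ⟨(σ1, σ2), hσ1, hσ2⟩
  rw [RibbonGraph.phi_treeAngle φ hφ h1, RibbonGraph.dual_treeAngle_eq φ hφ h2]
  set ρ : G.RotorConfig v := h1.choose.1 with hρdef
  set ρ' : G.RotorConfig v := h1.choose.2 with hρ'def
  set σ : G.dual.RotorConfig w := h2.choose.1 with hσdef
  set σ' : G.dual.RotorConfig w := h2.choose.2 with hσ'def
  have hρT : G.TowardRoot v T ρ := h1.choose_spec.1
  have hρ'T : G.TowardRoot v T' ρ' := h1.choose_spec.2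
  have hσT : G.dual.TowardRoot w Tᶜ σ := h2.choose_spec.1
  have hσ'T : G.dual.TowardRoot w T'ᶜ σ' := h2.choose_spec.2
  set μ : G.D → G.dual.Jac := fun d =>
    G.dual.unitClass (G.rightFace d) w - φ (G.unitClass (G.tail d) v) with hμdef
  have hμrev : ∀ d, μ (G.rev d) = μ d := by
    intro d
    have key : G.dual.unitClass (G.leftFace d) w - G.dual.unitClass (G.rightFace d) w
        = φ (G.unitClass (G.head d) v) - φ (G.unitClass (G.tail d) v) := by
      have e1 := Multigraph.unitClass_eq_sub (G := G.dual.toMultigraph) (G.leftFace d) (G.rightFace d) w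
      have e2 := Multigraph.unitClass_eq_sub (G := G.toMultigraph) (G.head d) (G.tail d) v
      rw [← e1, ← map_sub, ← e2]
      exact (RibbonGraph.dual_dartBoundary_def d).symm.trans (hφ d).symm
    simp only [hμdef]
    rw [RibbonGraph.rightFace_rev, Multigraph.tail_rev, sub_eq_sub_iff_sub_eq_sub]
    exact key
  -- complements are reversal-closed and have the right cardinality
  have hrevT : ∀ d ∈ Tᶜ, G.rev d ∈ Tᶜ := by
    intro d hd
    rw [Finset.mem_compl] at hd ⊢
    intro hcon
    apply hd
    have h := hT.1 _ hcon
    rwa [G.rev_invol] at h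
  have hrevT' : ∀ d ∈ T'ᶜ, G.rev d ∈ T'ᶜ := by
    intro d hd
    rw [Finset.mem_compl] at hd ⊢
    intro hcon
    apply hd
    have h := hT'.1 _ hcon
    rwa [G.rev_invol] at h
  have hcardT : Tᶜ.card = 2 * (Fintype.card G.dual.V - 1) :=
    RibbonGraph.card_compl_tree hplanar hT.2.2 v w
  have hcardT' : T'ᶜ.card = 2 * (Fintype.card G.dual.V - 1) :=
    RibbonGraph.card_compl_tree hplanar hT'.2.2 v w
  -- the union of the two rotor sets is a transversal of the edges
  have htrans : ∀ (S : Finset G.D), G.IsSpanningTree S →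
      ∀ (τ : G.RotorConfig v), G.TowardRoot v S τ →
      ∀ (κ : G.dual.RotorConfig w), G.dual.TowardRoot w Sᶜ κ →
      Sᶜ.card = 2 * (Fintype.card G.dual.V - 1) →
      (∀ d ∈ Sᶜ, G.rev d ∈ Sᶜ) →
      ∀ d, d ∈ RibbonGraph.rotorSet τ ∪ (RibbonGraph.rotorSet (G := G.dual) κ : Finset G.D) ↔
        G.rev d ∉ RibbonGraph.rotorSet τ ∪ (RibbonGraph.rotorSet (G := G.dual) κ : Finset G.D) := by
    intro S hS τ hτ κ hκ hcardS hrevS d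
    have hRS : RibbonGraph.rotorSet τ ⊆ S := RibbonGraph.rotorSet_subset hτ
    have hKS : (RibbonGraph.rotorSet (G := G.dual) κ : Finset G.D) ⊆ Sᶜ := RibbonGraph.rotorSet_subset hκ
    by_cases hd : d ∈ S
    · have hrd : G.rev d ∈ S := hS.1 d hd
      have h1 : d ∉ (RibbonGraph.rotorSet (G := G.dual) κ : Finset G.D) :=
        fun h => (Finset.mem_compl.1 (hKS h)) hd
      have h2 : G.rev d ∉ (RibbonGraph.rotorSet (G := G.dual) κ : Finset G.D) :=
        fun h => (Finset.mem_compl.1 (hKS h)) hrd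
      have hiff := RibbonGraph.mem_rotorSet_iff_rev hτ hS.1 hS.2.2 hd
      rw [Finset.mem_union (s := RibbonGraph.rotorSet τ) (t := (RibbonGraph.rotorSet (G := G.dual) κ : Finset G.D)), Finset.mem_union (s := RibbonGraph.rotorSet τ) (t := (RibbonGraph.rotorSet (G := G.dual) κ : Finset G.D))]
      constructor
      · rintro (h | h)
        · rintro (h' | h')
          · exact (hiff.1 h) h'
          · exact h2 h'
        · exact absurd h h1
      · intro hcon
        left
        exact hiff.2 (fun hr => hcon (Or.inl hr))
    · have hdc : d ∈ Sᶜ := Finset.mem_compl.2 hd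
      have hrdc : G.rev d ∈ Sᶜ := hrevS d hdc
      have h1 : d ∉ RibbonGraph.rotorSet τ := fun h => hd (hRS h)
      have h2 : G.rev d ∉ RibbonGraph.rotorSet τ :=
        fun h => (Finset.mem_compl.1 hrdc) (hRS h)
      have hiff := RibbonGraph.mem_rotorSet_iff_rev (G := G.dual) hκ hrevS hcardS hdc
      rw [RibbonGraph.dual_rev_apply] at hiff
      rw [Finset.mem_union (s := RibbonGraph.rotorSet τ) (t := (RibbonGraph.rotorSet (G := G.dual) κ : Finset G.D)), Finset.mem_union (s := RibbonGraph.rotorSet τ) (t := (RibbonGraph.rotorSet (G := G.dual) κ : Finset G.D))]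
      constructor
      · rintro (h | h)
        · exact absurd h h1
        · rintro (h' | h')
          · exact h2 h'
          · exact (hiff.1 h) h'
      · intro hcon
        right
        exact hiff.2 (fun hr => hcon (Or.inr hr))
  have hdisj1 : Disjoint (RibbonGraph.rotorSet ρ) (RibbonGraph.rotorSet (G := G.dual) σ : Finset G.D) := by
    refine Finset.disjoint_left.2 ?_
    intro d hdρ hdσ
    exact Finset.mem_compl.1 (RibbonGraph.rotorSet_subset hσT hdσ)
      (RibbonGraph.rotorSet_subset hρT hdρ)
  have hdisj2 : Disjoint (RibbonGraph.rotorSet ρ') (RibbonGraph.rotorSet (G := G.dual) σ' : Finset G.D) := by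
    refine Finset.disjoint_left.2 ?_
    intro d hdρ hdσ
    exact Finset.mem_compl.1 (RibbonGraph.rotorSet_subset hσ'T hdσ)
      (RibbonGraph.rotorSet_subset hρ'T hdρ)
  -- evaluation of the rotor-set sums
  have hRsum : ∀ (S : Finset G.D) (τ : G.RotorConfig v), G.TowardRoot v S τ →
      (∑ d ∈ RibbonGraph.rotorSet τ, μ d) =
      (∑ u : {u : G.V // u ≠ v}, G.dual.unitClass (G.rightFace (τ.1 u.1 u.2)) w)
        - φ (∑ u : {u : G.V // u ≠ v}, G.unitClass u.1 v) := by
    intro S τ hτ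
    have hinj : ∀ a ∈ (Finset.univ : Finset {u : G.V // u ≠ v}), ∀ b ∈ Finset.univ,
        (fun u : {u : G.V // u ≠ v} => τ.1 u.1 u.2) a
          = (fun u : {u : G.V // u ≠ v} => τ.1 u.1 u.2) b → a = b := by
      intro a _ b _ hab
      have h' : τ.1 a.1 a.2 = τ.1 b.1 b.2 := hab
      apply Subtype.ext
      rw [← τ.2 a.1 a.2, ← τ.2 b.1 b.2, h']
    simp only [RibbonGraph.rotorSet]
    rw [Finset.sum_image hinj]
    have hterm : ∀ u : {u : G.V // u ≠ v},
        μ (τ.1 u.1 u.2) = G.dual.unitClass (G.rightFace (τ.1 u.1 u.2)) w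
          - φ (G.unitClass u.1 v) := by
      intro u
      simp only [hμdef]
      rw [τ.2 u.1 u.2]
    rw [Finset.sum_congr rfl (fun u _ => hterm u), Finset.sum_sub_distrib, ← map_sum]
  have hSsum : ∀ (S : Finset G.D) (κ : G.dual.RotorConfig w), G.dual.TowardRoot w S κ →
      (∑ d ∈ (RibbonGraph.rotorSet (G := G.dual) κ : Finset G.D), μ d) =
      (∑ g : {g : G.dual.V // g ≠ w}, G.dual.unitClass g.1 w)
        - φ (∑ g : {g : G.dual.V // g ≠ w}, G.unitClass (G.tail (κ.1 g.1 g.2)) v) := by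
    intro S κ hκ
    have hinj : ∀ a ∈ (Finset.univ : Finset {g : G.dual.V // g ≠ w}), ∀ b ∈ Finset.univ,
        (fun g : {g : G.dual.V // g ≠ w} => κ.1 g.1 g.2) a
          = (fun g : {g : G.dual.V // g ≠ w} => κ.1 g.1 g.2) b → a = b := by
      intro a _ b _ hab
      have h' : κ.1 a.1 a.2 = κ.1 b.1 b.2 := hab
      apply Subtype.ext
      rw [← κ.2 a.1 a.2, ← κ.2 b.1 b.2, h']
    simp only [RibbonGraph.rotorSet]
    rw [Finset.sum_image hinj]
    have hterm : ∀ g : {g : G.dual.V // g ≠ w},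
        μ (κ.1 g.1 g.2) = G.dual.unitClass g.1 w
          - φ (G.unitClass (G.tail (κ.1 g.1 g.2)) v) := by
      intro g
      simp only [hμdef]
      have e : G.rightFace (κ.1 g.1 g.2) = g.1 := by
        show G.dual.tail (κ.1 g.1 g.2) = g.1
        exact κ.2 g.1 g.2
      rw [e]
    rw [Finset.sum_congr rfl (fun g _ => hterm g), Finset.sum_sub_distrib, ← map_sum]
  -- put everything together
  have hO1 := htrans T hT ρ hρT σ hσT hcardT hrevT
  have hO2 := htrans T' hT' ρ' hρ'T σ' hσ'T hcardT' hrevT'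
  have hsum := sum_transversal G.rev G.rev_invol μ hμrev hO1 hO2
  rw [Finset.sum_union hdisj1, Finset.sum_union hdisj2,
    hRsum T ρ hρT, hRsum T' ρ' hρ'T] at hsum
  have hbridge1 : @Finset.sum G.D G.dual.Jac _ (RibbonGraph.rotorSet (G := G.dual) σ) μ
      = (∑ g : {g : G.dual.V // g ≠ w}, G.dual.unitClass g.1 w)
        - φ (∑ g : {g : G.dual.V // g ≠ w}, G.unitClass (G.tail (σ.1 g.1 g.2)) v) :=
    hSsum Tᶜ σ hσT
  have hbridge2 : @Finset.sum G.D G.dual.Jac _ (RibbonGraph.rotorSet (G := G.dual) σ') μ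
      = (∑ g : {g : G.dual.V // g ≠ w}, G.dual.unitClass g.1 w)
        - φ (∑ g : {g : G.dual.V // g ≠ w}, G.unitClass (G.tail (σ'.1 g.1 g.2)) v) :=
    hSsum T'ᶜ σ' hσ'T
  rw [hbridge1, hbridge2] at hsum
  set A := ∑ u : {u : G.V // u ≠ v}, G.dual.unitClass (G.rightFace (ρ.1 u.1 u.2)) w with hA
  set A' := ∑ u : {u : G.V // u ≠ v}, G.dual.unitClass (G.rightFace (ρ'.1 u.1 u.2)) w with hA'
  set B := φ (∑ g : {g : G.dual.V // g ≠ w}, G.unitClass (G.tail (σ.1 g.1 g.2)) v) with hB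
  set B' := φ (∑ g : {g : G.dual.V // g ≠ w}, G.unitClass (G.tail (σ'.1 g.1 g.2)) v) with hB'
  set c := φ (∑ u : {u : G.V // u ≠ v}, G.unitClass u.1 v) with hc
  set p := ∑ g : {g : G.dual.V // g ≠ w}, G.dual.unitClass g.1 w with hp
  have key : A - B = A' - B' := by
    calc A - B = ((A - c) + (p - B)) + (c - p) := by abel
    _ = ((A' - c) + (p - B')) + (c - p) := by rw [hsum]
    _ = A' - B' := by abel
  have goalL : (∑ u : {u : G.V // u ≠ v}, G.dual.unitClass (G.rightFace (ρ.1 u.1 u.2))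
      (G.rightFace (ρ'.1 u.1 u.2))) = A - A' := by
    rw [hA, hA', ← Finset.sum_sub_distrib]
    exact Finset.sum_congr rfl (fun u _ => Multigraph.unitClass_eq_sub _ _ _)
  have goalR : φ (∑ g : {g : G.dual.V // g ≠ w}, G.unitClass (G.tail (σ.1 g.1 g.2))
      (G.tail (σ'.1 g.1 g.2))) = B - B' := by
    rw [hB, hB', ← map_sub, ← Finset.sum_sub_distrib]
    congr 1
    exact Finset.sum_congr rfl (fun g _ => Multigraph.unitClass_eq_sub _ _ _)
  rw [goalL, goalR]
  exact sub_eq_sub_iff_sub_eq_sub.1 key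
end
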